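/- arXiv:1306.6220 — 3 statements merged into one kernel-verified Lean document; each statement's English description precedes it below -/
import Mathlib

section
/- Let λ, μ ∈ ℝ satisfy cos(λπ) > cos(μπ). Then the function k ↦ Θ(λK(k), k)/Θ(μK(k), k) is positive and strictly monotone decreasing on the interval k ∈ (0,1). -/
open Real

/-- Complete elliptic integral of the first kind. -/
noncomputable def EllK (k : ℝ) : ℝ :=
  ∫ θ in (0:ℝ)..(π/2), 1 / Real.sqrt (1 - k^2 * Real.sin θ ^ 2)

/-- Complete elliptic integral of the second kind. -/
noncomputable def EllE (k : ℝ) : ℝ :=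
  ∫ θ in (0:ℝ)..(π/2), Real.sqrt (1 - k^2 * Real.sin θ ^ 2)

/-- Complementary complete elliptic integral `K'(k) = K(√(1-k²))`. -/
noncomputable def EllK' (k : ℝ) : ℝ := EllK (Real.sqrt (1 - k^2))

/-- Complementary elliptic integral of the second kind `E'(k) = E(√(1-k²))`. -/
noncomputable def EllE' (k : ℝ) : ℝ := EllE (Real.sqrt (1 - k^2))

/-- The nome `q = exp(-π K'(k)/K(k))`. -/
noncomputable def nome (k : ℝ) : ℝ := Real.exp (-π * EllK' k / EllK k)

/-- Jacobi's theta function `Θ(u,k) = 1 + 2 ∑_{n≥1} (-1)^n q^{n²} cos(nπu/K)`. -/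
noncomputable def JTheta (u k : ℝ) : ℝ :=
  1 + 2 * ∑' n : ℕ, (-1 : ℝ)^(n+1) * nome k ^ ((n+1)^2) *
    Real.cos (((n:ℝ)+1) * π * u / EllK k)

/-- Jacobi's theta function `H(u,k) = 2 ∑_{n≥0} (-1)^n q^{(n+1/2)²} sin((2n+1)πu/(2K))`. -/
noncomputable def JH (u k : ℝ) : ℝ :=
  2 * ∑' n : ℕ, (-1 : ℝ)^n * nome k ^ ((((n:ℝ) + 1/2)^2)) *
    Real.sin ((2*(n:ℝ)+1) * π * u / (2 * EllK k))

/-- Jacobi's theta function `H₁(u,k) = 2 ∑_{n≥0} q^{(n+1/2)²} cos((2n+1)πu/(2K))`. -/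
noncomputable def JH1 (u k : ℝ) : ℝ :=
  2 * ∑' n : ℕ, nome k ^ ((((n:ℝ) + 1/2)^2)) *
    Real.cos ((2*(n:ℝ)+1) * π * u / (2 * EllK k))

/-- Jacobi's theta function `Θ₁(u,k) = 1 + 2 ∑_{n≥1} q^{n²} cos(nπu/K)`. -/
noncomputable def JTheta1 (u k : ℝ) : ℝ :=
  1 + 2 * ∑' n : ℕ, nome k ^ ((n+1)^2) * Real.cos (((n:ℝ)+1) * π * u / EllK k)

/-- Jacobi's zeta function `zn(u,k) = Θ_u(u,k)/Θ(u,k)`. -/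
noncomputable def zn (u k : ℝ) : ℝ := deriv (fun v => JTheta v k) u / JTheta u k

/-- Jacobi's elliptic sine `sn(u,k) = H(u,k)/(√k Θ(u,k))`. -/
noncomputable def sn (u k : ℝ) : ℝ := JH u k / (Real.sqrt k * JTheta u k)

/-- Jacobi's elliptic cosine `cn(u,k) = √(k'/k) H₁(u,k)/Θ(u,k)`. -/
noncomputable def cn (u k : ℝ) : ℝ :=
  Real.sqrt (Real.sqrt (1 - k^2) / k) * JH1 u k / JTheta u k

/-- Jacobi's delta amplitude `dn(u,k) = √(k') Θ₁(u,k)/Θ(u,k)`. -/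
noncomputable def dn (u k : ℝ) : ℝ :=
  Real.sqrt (Real.sqrt (1 - k^2)) * JTheta1 u k / JTheta u k



section ThetaAux
open Finset Filter Real

/-- Gaussian binomial coefficient `[m choose j]_Q` as a function of `Q`. -/
def gb {R : Type*} [CommRing R] : ℕ → ℕ → R → R
  | _, 0, _ => 1
  | 0, _+1, _ => 0
  | m+1, j+1, Q => gb m (j+1) Q + Q^(m-j) * gb m j Q

lemma gb_zero_right {R : Type*} [CommRing R] (m : ℕ) (Q : R) : gb m 0 Q = 1 := by
  cases m <;> rfl

lemma gb_eq_zero {R : Type*} [CommRing R] {m j : ℕ} (h : m < j) (Q : R) : gb m j Q = 0 := by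
  induction m generalizing j with
  | zero => obtain ⟨j, rfl⟩ := Nat.exists_eq_add_of_lt h; rfl
  | succ m ih =>
    obtain ⟨j, rfl⟩ : ∃ j', j = j' + 1 := ⟨j - 1, by omega⟩
    show gb m (j+1) Q + Q^(m-j) * gb m j Q = 0
    rw [ih (by omega), ih (by omega), mul_zero, add_zero]

/-- `Dprod j Q = ∏_{r=1}^{j} (1 - Q^r)`. -/
def Dprod {R : Type*} [CommRing R] (j : ℕ) (Q : R) : R := ∏ r ∈ range j, (1 - Q^(r+1))

lemma gb_mul_D {R : Type*} [CommRing R] (m j : ℕ) (Q : R) :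
    gb m j Q * Dprod j Q = ∏ s ∈ range j, (1 - Q^(m+1-j+s)) := by
  induction m generalizing j with
  | zero =>
    match j with
    | 0 => simp [gb_zero_right, Dprod]
    | 1 => simp [gb, Dprod]
    | j+2 =>
      rw [gb_eq_zero (by omega), zero_mul]
      refine (Finset.prod_eq_zero (Finset.mem_range.2 (show 0 < j+2 by omega)) ?_).symm
      have : 0 + 1 - (j + 2) + 0 = 0 := by omega
      rw [this]; ring
  | succ m ih =>
    match j with
    | 0 => simp [gb_zero_right, Dprod]
    | j+1 =>
      rcases le_or_gt (j+1) (m+1) with hj | hj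
      · have hjm : j ≤ m := by omega
        show (gb m (j+1) Q + Q^(m-j) * gb m j Q) * Dprod (j+1) Q = _
        have hD : Dprod (j+1) Q = Dprod j Q * (1 - Q^(j+1)) := by
          rw [Dprod, Dprod, Finset.prod_range_succ]
        have h1 : gb m (j+1) Q * Dprod (j+1) Q
            = (∏ s ∈ range j, (1 - Q^(m-j+1+s))) * (1 - Q^(m-j)) := by
          rw [ih (j+1), Finset.prod_range_succ']
          congr 1
          · refine Finset.prod_congr rfl fun s _ => ?_
            congr 2; omega
          · congr 2; omega
        have h2 : gb m j Q * Dprod j Q = ∏ s ∈ range j, (1 - Q^(m-j+1+s)) := by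
          rw [ih j]
          refine Finset.prod_congr rfl fun s _ => ?_
          congr 2; omega
        have hT : ∏ s ∈ range (j+1), (1 - Q^(m+1+1-(j+1)+s))
            = (∏ s ∈ range j, (1 - Q^(m-j+1+s))) * (1 - Q^(m+1)) := by
          rw [Finset.prod_range_succ]
          congr 1
          · refine Finset.prod_congr rfl fun s _ => ?_
            congr 2; omega
          · congr 2; omega
        have hpow : Q^(m-j) * Q^(j+1) = Q^(m+1) := by
          rw [← pow_add]; congr 1; omega
        rw [hT, add_mul, h1, hD]
        linear_combination (Q^(m-j) * (1 - Q^(j+1))) * h2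
          - (∏ s ∈ range j, (1 - Q^(m-j+1+s))) * hpow
      · rw [gb_eq_zero hj, zero_mul]
        refine (Finset.prod_eq_zero (Finset.mem_range.2 (show 0 < j+1 by omega)) ?_).symm
        have : m + 1 + 1 - (j + 1) + 0 = 0 := by omega
        rw [this]; ring

lemma gb_nonneg {m j : ℕ} {Q : ℝ} (hQ : 0 ≤ Q) : 0 ≤ gb m j Q := by
  induction m generalizing j with
  | zero => match j with
    | 0 => simp [gb_zero_right]
    | j+1 => rw [gb_eq_zero (by omega)]
  | succ m ih => match j with
    | 0 => simp [gb_zero_right]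
    | j+1 => exact add_nonneg ih (mul_nonneg (pow_nonneg hQ _) ih)

lemma map_gb {R S : Type*} [CommRing R] [CommRing S] (f : R →+* S) (m j : ℕ) (Q : R) :
    f (gb m j Q) = gb m j (f Q) := by
  induction m generalizing j with
  | zero => match j with
    | 0 => simp [gb_zero_right]
    | j+1 => simp [gb_eq_zero (by omega : 0 < j+1)]
  | succ m ih => match j with
    | 0 => simp [gb_zero_right]
    | j+1 => show f (gb m (j+1) Q + Q^(m-j) * gb m j Q) = _
             simp [ih, map_add, map_mul, map_pow]; rfl

lemma choose_two_succ (j : ℕ) : (j+1).choose 2 = j.choose 2 + j := by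
  rw [Nat.choose_succ_succ, Nat.choose_one_right, Nat.add_comm]

theorem gauss_identity {R : Type*} [CommRing R] (m : ℕ) (x Q : R) :
    ∏ k ∈ range m, (1 + x * Q^k)
      = ∑ j ∈ range (m+1), gb m j Q * Q^(j.choose 2) * x^j := by
  induction m with
  | zero => simp [gb_zero_right]
  | succ m ih =>
    rw [Finset.prod_range_succ, ih]
    rw [Finset.sum_range_succ' (fun j => gb (m+1) j Q * Q^(j.choose 2) * x^j) (m+1)]
    have e0 : gb (m+1) 0 Q * Q^((0:ℕ).choose 2) * x^0 = 1 := by simp [gb_zero_right]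
    rw [e0]
    have expand : ∀ i ∈ range (m+1),
        gb (m+1) (i+1) Q * Q^((i+1).choose 2) * x^(i+1)
          = gb m (i+1) Q * Q^((i+1).choose 2) * x^(i+1)
            + (gb m i Q * Q^(i.choose 2) * x^i) * (x * Q^m) := by
      intro i hi
      have hi' : i ≤ m := by have := Finset.mem_range.mp hi; omega
      show (gb m (i+1) Q + Q^(m-i) * gb m i Q) * _ * _ = _
      have hq : Q^(m-i) * Q^((i+1).choose 2) = Q^(i.choose 2) * Q^m := by
        rw [← pow_add, ← pow_add, choose_two_succ]; congr 1; omega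
      calc (gb m (i+1) Q + Q^(m-i) * gb m i Q) * Q^((i+1).choose 2) * x^(i+1)
          = gb m (i+1) Q * Q^((i+1).choose 2) * x^(i+1)
            + gb m i Q * (Q^(m-i) * Q^((i+1).choose 2)) * x^(i+1) := by ring
        _ = _ := by rw [hq]; ring
    rw [Finset.sum_congr rfl expand, Finset.sum_add_distrib]
    have ht : ∑ i ∈ range (m+1), gb m (i+1) Q * Q^((i+1).choose 2) * x^(i+1) + 1
        = ∑ j ∈ range (m+2), gb m j Q * Q^(j.choose 2) * x^j := by
      rw [Finset.sum_range_succ' (fun j => gb m j Q * Q^(j.choose 2) * x^j) (m+1)]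
      simp [gb_zero_right]
    have ht2 : ∑ j ∈ range (m+2), gb m j Q * Q^(j.choose 2) * x^j
        = ∑ j ∈ range (m+1), gb m j Q * Q^(j.choose 2) * x^j := by
      rw [Finset.sum_range_succ, gb_eq_zero (by omega), zero_mul, zero_mul, add_zero]
    rw [mul_add, mul_one, ← Finset.sum_mul]
    linear_combination - ht - ht2

lemma two_choose_two (j : ℕ) : 2 * j.choose 2 = j * (j - 1) := by
  induction j with
  | zero => rfl
  | succ j ih =>
    rw [choose_two_succ, Nat.mul_add, ih, Nat.succ_sub_one]
    cases j with
    | zero => rfl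
    | succ s => simp [Nat.succ_sub_one]; ring

lemma sum_odds (m : ℕ) : ∑ n ∈ range m, (2*n+1) = m^2 := by
  induction m with
  | zero => rfl
  | succ m ih => rw [Finset.sum_range_succ, ih]; ring

theorem fin_jacobi (m : ℕ) (x q : ℂ) (hx : x ≠ 0) (hq : q ≠ 0) :
    ∏ n ∈ range m, ((1 + x * q^(2*n+1)) * (1 + x⁻¹ * q^(2*n+1)))
      = ∑ j ∈ range (2*m+1),
          (gb (2*m) j (q^2)) * q^(((j:ℤ) - m).natAbs^2) * x^((j:ℤ) - (m:ℤ)) := by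
  set y : ℂ := x * q * (q^(2*m))⁻¹ with hy
  have hsplit : ∏ n ∈ range m, ((1 + x * q^(2*n+1)) * (1 + x⁻¹ * q^(2*n+1)))
      = (x⁻¹)^m * q^(m^2) * ∏ k ∈ range (2*m), (1 + y * (q^2)^k) := by
    have h2 : ∏ k ∈ range (2*m), (1 + y * (q^2)^k)
        = (∏ n ∈ range m, (1 + x * (q^(2*n+1))⁻¹)) * ∏ n ∈ range m, (1 + x * q^(2*n+1)) := by
      rw [two_mul, Finset.prod_range_add]
      congr 1
      · rw [← Finset.prod_range_reflect]
        refine Finset.prod_congr rfl fun n hn => ?_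
        have hn' : n < m := Finset.mem_range.mp hn
        congr 1
        rw [hy]
        have : (q^2)^(m - 1 - n) = q^(2*(m-1-n)) := by rw [← pow_mul]
        rw [this, mul_assoc, mul_assoc]
        congr 1
        refine eq_inv_of_mul_eq_one_left ?_
        have he : (2 * n + 1) + (1 + 2 * (m - 1 - n)) = 2*m := by omega
        rw [mul_comm]
        calc q ^ (2*n+1) * (q * ((q ^ (2 * m))⁻¹ * q ^ (2 * (m - 1 - n))))
            = q ^ ((2*n+1) + (1 + 2 * (m - 1 - n))) * (q ^ (2 * m))⁻¹ := by
              rw [pow_add, pow_add, pow_one]; ring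
          _ = 1 := by rw [he, mul_inv_cancel₀ (pow_ne_zero _ hq)]
      · refine Finset.prod_congr rfl fun n hn => ?_
        have hn' : n < m := Finset.mem_range.mp hn
        congr 1
        rw [hy]
        have : (q^2)^(m + n) = q^(2*m) * q^(2*n) := by rw [← pow_mul, ← pow_add]; ring_nf
        rw [this]
        field_simp
        ring
    have h3 : ∀ n ∈ range m, (1 + x⁻¹ * q^(2*n+1))
        = (x⁻¹ * q^(2*n+1)) * (1 + x * (q^(2*n+1))⁻¹) := by
      intro n _
      field_simp
      ring
    have h4 : ∏ n ∈ range m, (1 + x⁻¹ * q^(2*n+1))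
        = (x⁻¹)^m * q^(m^2) * ∏ n ∈ range m, (1 + x * (q^(2*n+1))⁻¹) := by
      rw [Finset.prod_congr rfl h3, Finset.prod_mul_distrib, Finset.prod_mul_distrib,
        Finset.prod_const, Finset.prod_pow_eq_pow_sum, sum_odds, Finset.card_range]
    rw [Finset.prod_mul_distrib, h4, h2]
    ring
  rw [hsplit, gauss_identity, Finset.mul_sum]
  refine Finset.sum_congr rfl fun j hj => ?_
  have hkey : m^2 + (2 * j.choose 2 + j) = (((j:ℤ) - (m:ℤ)).natAbs)^2 + 2*m*j := by
    have h5 : (((j:ℤ) - (m:ℤ)).natAbs)^2 + 2*m*j = j^2 + m^2 := by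
      zify
      rw [sq_abs]
      ring
    rw [h5, two_choose_two]
    cases j with
    | zero => simp
    | succ s => simp [Nat.succ_sub_one]; ring
  have hxp : (x⁻¹)^m * x^j = x^((j:ℤ) - (m:ℤ)) := by
    rw [zpow_sub₀ hx, zpow_natCast, zpow_natCast, div_eq_mul_inv, inv_pow]
    ring
  have hqp : q^(m^2) * ((q^2)^(j.choose 2) * (q^j * ((q^(2*m))⁻¹)^j))
      = q^((((j:ℤ) - (m:ℤ)).natAbs)^2) := by
    rw [inv_pow, ← pow_mul, ← pow_mul]
    calc q^(m^2) * (q^(2 * j.choose 2) * (q^j * (q^(2*m*j))⁻¹))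
        = q^(m^2 + (2*j.choose 2 + j)) * (q^(2*m*j))⁻¹ := by
          rw [pow_add, pow_add]; ring
      _ = q^((((j:ℤ) - (m:ℤ)).natAbs)^2 + 2*m*j) * (q^(2*m*j))⁻¹ := by rw [hkey]
      _ = _ := by
          rw [pow_add, mul_assoc, mul_inv_cancel₀ (pow_ne_zero _ hq), mul_one]
  calc (x⁻¹)^m * q^(m^2) * (gb (2*m) j (q^2) * (q^2)^(j.choose 2) * y^j)
      = gb (2*m) j (q^2) * (q^(m^2) * ((q^2)^(j.choose 2) * (q^j * ((q^(2*m))⁻¹)^j)))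
          * ((x⁻¹)^m * x^j) := by rw [hy]; ring
    _ = _ := by rw [hqp, hxp]

section Dlims
variable {Q : ℝ}

lemma one_sub_pow_pos (hQ0 : 0 < Q) (hQ1 : Q < 1) (r : ℕ) : 0 < 1 - Q^(r+1) := by
  have : Q^(r+1) < 1 := pow_lt_one₀ hQ0.le hQ1 (by omega)
  linarith

lemma Dprod_pos (hQ0 : 0 < Q) (hQ1 : Q < 1) (j : ℕ) : 0 < Dprod j Q :=
  Finset.prod_pos fun r _ => one_sub_pow_pos hQ0 hQ1 r

lemma Dprod_le_one (hQ0 : 0 < Q) (hQ1 : Q < 1) (j : ℕ) : Dprod j Q ≤ 1 :=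
  Finset.prod_le_one (fun r _ => (one_sub_pow_pos hQ0 hQ1 r).le)
    (fun r _ => by nlinarith [pow_pos hQ0 (r+1)])

lemma summable_logD (hQ0 : 0 < Q) (hQ1 : Q < 1) :
    Summable (fun r : ℕ => Real.log (1 - Q^(r+1))) := by
  have hgeo : Summable (fun r : ℕ => Q^(r+1) * (1-Q)⁻¹) := by
    apply Summable.mul_right
    exact (summable_geometric_of_lt_one hQ0.le hQ1).mul_left Q |>.congr (fun r => by ring)
  rw [← summable_neg_iff]
  apply Summable.of_nonneg_of_le (fun r => ?_) (fun r => ?_) hgeo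
  · rw [neg_nonneg]
    apply Real.log_nonpos (one_sub_pow_pos hQ0 hQ1 r).le
    nlinarith [pow_pos hQ0 (r+1)]
  · have ha0 : 0 < Q^(r+1) := pow_pos hQ0 _
    have ha2 : 0 < 1 - Q^(r+1) := one_sub_pow_pos hQ0 hQ1 r
    have hQ' : 0 < 1 - Q := by linarith
    have haQ : 1 - Q ≤ 1 - Q^(r+1) := by
      have : Q^(r+1) ≤ Q^1 := pow_le_pow_of_le_one hQ0.le hQ1.le (by omega)
      rw [pow_one] at this; linarith
    rw [← Real.log_inv]
    refine le_trans (Real.log_le_sub_one_of_pos (by positivity)) ?_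
    have key : (1 - Q^(r+1))⁻¹ - 1 = Q^(r+1) * (1 - Q^(r+1))⁻¹ := by
      field_simp
      ring
    rw [key]
    gcongr

/-- limit of the partial products `Dprod`. -/
noncomputable def C0 (Q : ℝ) : ℝ := Real.exp (∑' r : ℕ, Real.log (1 - Q^(r+1)))

lemma C0_pos : 0 < C0 Q := Real.exp_pos _

lemma log_Dprod (hQ0 : 0 < Q) (hQ1 : Q < 1) (j : ℕ) :
    Real.log (Dprod j Q) = ∑ r ∈ range j, Real.log (1 - Q^(r+1)) :=
  Real.log_prod fun r _ => (one_sub_pow_pos hQ0 hQ1 r).ne'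

lemma C0_le_Dprod (hQ0 : 0 < Q) (hQ1 : Q < 1) (j : ℕ) : C0 Q ≤ Dprod j Q := by
  rw [← Real.exp_log (Dprod_pos hQ0 hQ1 j), C0]
  apply Real.exp_le_exp.2
  rw [log_Dprod hQ0 hQ1 j]
  have hnn : ∀ r ∉ range j, 0 ≤ -Real.log (1 - Q^(r+1)) := fun r _ =>
    neg_nonneg.2 (Real.log_nonpos (one_sub_pow_pos hQ0 hQ1 r).le
      (by nlinarith [pow_pos hQ0 (r+1)]))
  have h := Summable.sum_le_tsum (range j) hnn (summable_logD hQ0 hQ1).neg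
  rw [tsum_neg, Finset.sum_neg_distrib] at h
  linarith

lemma tendsto_Dprod (hQ0 : 0 < Q) (hQ1 : Q < 1) :
    Tendsto (fun j => Dprod j Q) atTop (nhds (C0 Q)) := by
  have h1 : Tendsto (fun j => ∑ r ∈ range j, Real.log (1 - Q^(r+1))) atTop
      (nhds (∑' r : ℕ, Real.log (1 - Q^(r+1)))) :=
    (summable_logD hQ0 hQ1).hasSum.tendsto_sum_nat
  have h2 := (Real.continuous_exp.tendsto _).comp h1
  refine h2.congr fun j => ?_
  simp only [Function.comp_apply]
  rw [← log_Dprod hQ0 hQ1 j, Real.exp_log (Dprod_pos hQ0 hQ1 j)]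

lemma gb_le (hQ0 : 0 < Q) (hQ1 : Q < 1) (m j : ℕ) : gb m j Q ≤ (C0 Q)⁻¹ := by
  have hD := Dprod_pos hQ0 hQ1 j
  have hA : gb m j Q * Dprod j Q ≤ 1 := by
    rw [gb_mul_D]
    apply Finset.prod_le_one (fun s _ => ?_) (fun s _ => ?_)
    · have : Q^(m+1-j+s) ≤ 1 := pow_le_one₀ hQ0.le hQ1.le
      linarith
    · nlinarith [pow_nonneg hQ0.le (m+1-j+s)]
  calc gb m j Q = gb m j Q * Dprod j Q * (Dprod j Q)⁻¹ := by field_simp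
    _ ≤ 1 * (Dprod j Q)⁻¹ := by gcongr
    _ = (Dprod j Q)⁻¹ := one_mul _
    _ ≤ (C0 Q)⁻¹ := by
        gcongr
        · exact C0_pos
        · exact C0_le_Dprod hQ0 hQ1 j

lemma Dprod_split (a b : ℕ) (Q : ℝ) :
    Dprod (a+b) Q = Dprod a Q * ∏ s ∈ range b, (1 - Q^(a+1+s)) := by
  rw [Dprod, Dprod, Finset.prod_range_add]
  congr 1
  exact Finset.prod_congr rfl fun s _ => by congr 2; omega

lemma gb_closed (hQ0 : 0 < Q) (hQ1 : Q < 1) {m j : ℕ} (hj : j ≤ m) :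
    gb m j Q = Dprod m Q * (Dprod (m-j) Q)⁻¹ * (Dprod j Q)⁻¹ := by
  have h1 := gb_mul_D m j Q
  have h2 : Dprod ((m-j)+j) Q = Dprod (m-j) Q * ∏ s ∈ range j, (1 - Q^(m-j+1+s)) :=
    Dprod_split (m-j) j Q
  rw [show (m-j)+j = m by omega] at h2
  have h3 : ∏ s ∈ range j, (1 - Q^(m+1-j+s)) = ∏ s ∈ range j, (1 - Q^(m-j+1+s)) :=
    Finset.prod_congr rfl fun s _ => by congr 2; omega
  have hDj := Dprod_pos hQ0 hQ1 j
  have hDmj := Dprod_pos hQ0 hQ1 (m-j)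
  rw [h3] at h1
  field_simp
  rw [mul_assoc, mul_comm (Dprod (m-j) Q), ← mul_assoc, h1, h2]
  ring

lemma tendsto_gb (hQ0 : 0 < Q) (hQ1 : Q < 1) (i : ℤ) :
    Tendsto (fun m : ℕ => gb (2*m) ((i+m).toNat) Q) atTop (nhds (C0 Q)⁻¹) := by
  have haux : ∀ (f : ℕ → ℕ), Tendsto f atTop atTop →
      Tendsto (fun m => Dprod (f m) Q) atTop (nhds (C0 Q)) :=
    fun f hf => (tendsto_Dprod hQ0 hQ1).comp hf
  have h2m : Tendsto (fun m : ℕ => Dprod (2*m) Q) atTop (nhds (C0 Q)) :=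
    haux _ (Filter.tendsto_atTop_atTop.2 fun b => ⟨b, fun m hm => by omega⟩)
  have hip : Tendsto (fun m : ℕ => Dprod ((i+m).toNat) Q) atTop (nhds (C0 Q)) :=
    haux _ (Filter.tendsto_atTop_atTop.2 fun b => ⟨b + i.natAbs, fun m hm => by omega⟩)
  have him : Tendsto (fun m : ℕ => Dprod (2*m - (i+m).toNat) Q) atTop (nhds (C0 Q)) :=
    haux _ (Filter.tendsto_atTop_atTop.2 fun b => ⟨b + i.natAbs, fun m hm => by omega⟩)
  have hC := C0_pos (Q := Q)
  have hlim : Tendsto (fun m : ℕ =>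
      Dprod (2*m) Q * (Dprod (2*m - (i+m).toNat) Q)⁻¹ * (Dprod ((i+m).toNat) Q)⁻¹)
      atTop (nhds (C0 Q)⁻¹) := by
    have := (h2m.mul (him.inv₀ hC.ne')).mul (hip.inv₀ hC.ne')
    convert this using 2
    field_simp
  apply hlim.congr'
  filter_upwards [Filter.eventually_ge_atTop i.natAbs] with m hm
  rw [gb_closed hQ0 hQ1 (by omega)]
end Dlims

-- Part E
noncomputable def xu (lam : ℝ) : ℂ := Complex.exp ((↑(π*lam + π)) * Complex.I)

noncomputable def Ffin (m : ℕ) (q lam : ℝ) : ℝ :=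
  ∏ n ∈ range m, (1 - 2*Real.cos (π*lam)*q^(2*n+1) + q^(2*(2*n+1)))

noncomputable def Tfun (q lam : ℝ) : ℝ :=
  1 + 2 * ∑' n : ℕ, (-1:ℝ)^(n+1) * q^((n+1)^2) * Real.cos (((n:ℝ)+1) * π * lam)

lemma xu_ne_zero (lam : ℝ) : xu lam ≠ 0 := Complex.exp_ne_zero _

lemma abs_xu_zpow (lam : ℝ) (i : ℤ) : ‖xu lam ^ i‖ = 1 := by
  rw [norm_zpow, xu, Complex.norm_exp]
  simp

lemma xu_zpow (lam : ℝ) (i : ℤ) : xu lam ^ i = Complex.exp ((i : ℂ) * (↑(π*lam + π) * Complex.I)) := by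
  rw [Complex.exp_int_mul, xu]

lemma xu_zpow_add_neg (lam : ℝ) (i : ℤ) :
    xu lam ^ i + xu lam ^ (-i) = ((2 * Real.cos (i * (π*lam + π)) : ℝ) : ℂ) := by
  rw [xu_zpow, xu_zpow, Complex.ofReal_mul, Complex.ofReal_cos, Complex.cos]
  push_cast
  rw [neg_mul]
  ring

lemma factor_eq (q lam : ℝ) (n : ℕ) :
    (1 + xu lam * (q:ℂ)^(2*n+1)) * (1 + (xu lam)⁻¹ * (q:ℂ)^(2*n+1))
      = ((1 - 2*Real.cos (π*lam)*q^(2*n+1) + q^(2*(2*n+1)) : ℝ) : ℂ) := by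
  have hxx : xu lam * (xu lam)⁻¹ = 1 := mul_inv_cancel₀ (xu_ne_zero lam)
  have hsum : xu lam + (xu lam)⁻¹ = ((2 * Real.cos (π*lam + π) : ℝ) : ℂ) := by
    have h := xu_zpow_add_neg lam 1
    rw [zpow_one, zpow_neg, zpow_one] at h
    rw [h]
    norm_num
  have hcos : Real.cos (π*lam + π) = - Real.cos (π*lam) := by
    have := Real.cos_add_int_mul_pi (π*lam) 1
    simpa using this
  have expand : (1 + xu lam * (q:ℂ)^(2*n+1)) * (1 + (xu lam)⁻¹ * (q:ℂ)^(2*n+1))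
      = 1 + (xu lam + (xu lam)⁻¹) * (q:ℂ)^(2*n+1)
        + (xu lam * (xu lam)⁻¹) * ((q:ℂ)^(2*n+1))^2 := by ring
  rw [expand, hxx, hsum, hcos]
  push_cast
  ring

section Elims
variable {q : ℝ} (hq0 : 0 < q) (hq1 : q < 1) (lam : ℝ)

lemma summable_qpow (hq0 : 0 < q) (hq1 : q < 1) :
    Summable (fun i : ℤ => q^(i.natAbs^2)) := by
  have hnat : Summable (fun n : ℕ => q^(n^2)) := by
    apply Summable.of_nonneg_of_le (fun n => by positivity) (fun n => ?_)
      (summable_geometric_of_lt_one hq0.le hq1)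
    exact pow_le_pow_of_le_one hq0.le hq1.le (Nat.le_self_pow (by omega) n)
  apply Summable.of_nat_of_neg <;> simpa using hnat

/-- truncated summand -/
noncomputable def hfun (q lam : ℝ) (m : ℕ) (i : ℤ) : ℂ :=
  if i.natAbs ≤ m then ((gb (2*m) ((i+m).toNat) (q^2) * q^(i.natAbs^2) : ℝ):ℂ) * xu lam ^ i
  else 0

lemma Ffin_eq_tsum (hq0 : 0 < q) (m : ℕ) :
    ((Ffin m q lam : ℝ) : ℂ) = ∑' i : ℤ, hfun q lam m i := by
  have hq : (q:ℂ) ≠ 0 := Complex.ofReal_ne_zero.2 hq0.ne'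
  have h1 : ((Ffin m q lam : ℝ) : ℂ)
      = ∏ n ∈ range m, ((1 + xu lam * (q:ℂ)^(2*n+1)) * (1 + (xu lam)⁻¹ * (q:ℂ)^(2*n+1))) := by
    rw [Ffin, Complex.ofReal_prod]
    exact Finset.prod_congr rfl fun n _ => (factor_eq q lam n).symm
  rw [h1, fin_jacobi m (xu lam) (q:ℂ) (xu_ne_zero lam) hq]
  have h2 : ∀ j ∈ range (2*m+1),
      (gb (2*m) j ((q:ℂ)^2)) * (q:ℂ)^(((j:ℤ) - m).natAbs^2) * xu lam ^ ((j:ℤ) - (m:ℤ))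
        = hfun q lam m ((j:ℤ) - m) := by
    intro j hj
    have hj' : j < 2*m+1 := Finset.mem_range.mp hj
    rw [hfun, if_pos (by omega)]
    have hgb : ((gb (2*m) j (q^2) : ℝ) : ℂ) = gb (2*m) j ((q:ℂ)^2) := by
      have := map_gb Complex.ofRealHom (2*m) j (q^2)
      simpa using this
    have hj2 : (((j:ℤ) - m + m).toNat) = j := by omega
    rw [hj2, ← hgb]
    push_cast
    ring
  rw [Finset.sum_congr rfl h2, eq_comm]
  have hvan : ∀ i ∉ (range (2*m+1)).image (fun j : ℕ => (j:ℤ) - m), hfun q lam m i = 0 := by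
    intro i hi
    rw [hfun, if_neg]
    intro hle
    apply hi
    simp only [Finset.mem_image, Finset.mem_range]
    exact ⟨(i+m).toNat, by omega, by omega⟩
  rw [tsum_eq_sum hvan, Finset.sum_image (fun a _ b _ hab => by omega)]

lemma tendsto_Ffin_complex (hq0 : 0 < q) (hq1 : q < 1) (lam : ℝ) :
    Tendsto (fun m => ((Ffin m q lam : ℝ):ℂ)) atTop
      (nhds (∑' i : ℤ, ((((C0 (q^2))⁻¹ * q^(i.natAbs^2)) : ℝ) : ℂ) * xu lam ^ i)) := by
  have hQ0 : 0 < q^2 := by positivity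
  have hQ1 : q^2 < 1 := by nlinarith
  have hbd : Summable (fun i : ℤ => (C0 (q^2))⁻¹ * q^(i.natAbs^2)) :=
    (summable_qpow hq0 hq1).mul_left _
  have hpt : ∀ i : ℤ, Tendsto (fun m => hfun q lam m i) atTop
      (nhds (((((C0 (q^2))⁻¹ * q^(i.natAbs^2)) : ℝ) : ℂ) * xu lam ^ i)) := by
    intro i
    have hgb := tendsto_gb hQ0 hQ1 i
    have h2 : Tendsto (fun m : ℕ => ((gb (2*m) ((i+m).toNat) (q^2) * q^(i.natAbs^2) : ℝ):ℂ) * xu lam ^ i)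
        atTop (nhds (((((C0 (q^2))⁻¹ * q^(i.natAbs^2)) : ℝ) : ℂ) * xu lam ^ i)) := by
      apply Tendsto.mul_const
      have : Tendsto (fun m : ℕ => (gb (2*m) ((i+m).toNat) (q^2) * q^(i.natAbs^2) : ℝ))
          atTop (nhds ((C0 (q^2))⁻¹ * q^(i.natAbs^2))) := hgb.mul_const _
      exact (Complex.continuous_ofReal.tendsto _).comp this
    apply h2.congr'
    filter_upwards [Filter.eventually_ge_atTop i.natAbs] with m hm
    rw [hfun, if_pos hm]
  have hbound : ∀ᶠ (m : ℕ) in atTop, ∀ i : ℤ, ‖hfun q lam m i‖ ≤ (C0 (q^2))⁻¹ * q^(i.natAbs^2) := by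
    apply Filter.Eventually.of_forall
    intro m i
    rw [hfun]
    split_ifs with h
    · rw [norm_mul]
      have : ‖xu lam ^ i‖ = 1 := abs_xu_zpow lam i
      rw [this, mul_one, Complex.norm_real, Real.norm_eq_abs, abs_of_nonneg
        (mul_nonneg (gb_nonneg hQ0.le) (by positivity))]
      have hqp : (0:ℝ) ≤ q^(i.natAbs^2) := by positivity
      exact mul_le_mul_of_nonneg_right (gb_le hQ0 hQ1 (2*m) ((i+m).toNat)) hqp
    · simp only [norm_zero]
      exact mul_nonneg (inv_nonneg.2 C0_pos.le) (by positivity)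
  have := tendsto_tsum_of_dominated_convergence hbd hpt hbound
  apply this.congr fun m => (Ffin_eq_tsum lam hq0 m).symm
end Elims

section Elims2
variable {q : ℝ}

lemma tsum_id (hq0 : 0 < q) (hq1 : q < 1) (lam : ℝ) :
    ∑' i : ℤ, (((q^(i.natAbs^2)) : ℝ) : ℂ) * xu lam ^ i = ((Tfun q lam : ℝ) : ℂ) := by
  set f : ℤ → ℂ := fun i => (((q^(i.natAbs^2)) : ℝ) : ℂ) * xu lam ^ i with hf
  have hsum : Summable f := by
    apply Summable.of_norm
    have : ∀ i : ℤ, ‖f i‖ = q^(i.natAbs^2) := by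
      intro i
      rw [hf, norm_mul]
      have h1 : ‖xu lam ^ i‖ = 1 := abs_xu_zpow lam i
      rw [h1, mul_one, Complex.norm_real, Real.norm_eq_abs, abs_of_nonneg (by positivity)]
    rw [funext this]
    exact summable_qpow hq0 hq1
  obtain ⟨S, hS⟩ := hsum
  rw [hS.tsum_eq]
  have hnat := hS.nat_add_neg
  have hf0 : f 0 = 1 := by simp [hf]
  rw [hf0] at hnat
  set g : ℕ → ℂ := fun n : ℕ => f (n:ℤ) + f (-(n:ℤ)) with hgdef
  have hpair : ∀ n : ℕ, g (n+1)
      = ((2 * ((-1:ℝ)^(n+1) * q^((n+1)^2) * Real.cos (((n:ℝ)+1) * π * lam)) : ℝ) : ℂ) := by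
    intro n
    have hnn : (((n+1:ℕ) : ℤ)).natAbs = n+1 := by omega
    have hnn2 : ((-((n+1:ℕ):ℤ)).natAbs) = n+1 := by omega
    have e1 : g (n+1) = (((q^((n+1)^2)) : ℝ) : ℂ) * (xu lam ^ (((n+1:ℕ):ℤ)) + xu lam ^ (-((n+1:ℕ):ℤ))) := by
      rw [hgdef]
      simp only [hf]
      rw [hnn, hnn2]
      ring
    rw [e1, xu_zpow_add_neg lam (((n+1:ℕ):ℤ))]
    rw [← Complex.ofReal_mul]
    congr 1
    have hcos : Real.cos ((((n+1:ℕ):ℤ):ℝ) * (π*lam + π))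
        = (-1:ℝ)^(n+1) * Real.cos (((n:ℝ)+1) * π * lam) := by
      have h := Real.cos_add_int_mul_pi ((((n:ℝ))+1) * π * lam) ((n:ℤ)+1)
      have harg : (((n+1:ℕ):ℤ):ℝ) * (π*lam + π) = (((n:ℝ))+1) * π * lam + ((((n:ℤ)+1):ℤ):ℝ) * π := by
        push_cast
        ring
      rw [harg, h]
      norm_cast
    rw [hcos]
    ring
  have hsum1 : (S - 1) + ∑ i ∈ range 1, g i = S + 1 := by
    rw [Finset.sum_range_one, hgdef]
    simp only [Int.natCast_zero, neg_zero, hf0]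
    ring
  have hg : HasSum (fun n : ℕ => g (n+1)) (S - 1) := by
    apply (hasSum_nat_add_iff (f := g) 1).mpr
    rw [hsum1]
    exact hnat
  have hg2 : HasSum (fun n : ℕ =>
      ((2 * ((-1:ℝ)^(n+1) * q^((n+1)^2) * Real.cos (((n:ℝ)+1) * π * lam)) : ℝ) : ℂ)) (S - 1) := by
    rw [show (fun n : ℕ =>
      ((2 * ((-1:ℝ)^(n+1) * q^((n+1)^2) * Real.cos (((n:ℝ)+1) * π * lam)) : ℝ) : ℂ))
        = fun n : ℕ => g (n+1) from funext fun n => (hpair n).symm]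
    exact hg
  have hre : HasSum (fun n : ℕ =>
      2 * ((-1:ℝ)^(n+1) * q^((n+1)^2) * Real.cos (((n:ℝ)+1) * π * lam))) ((S - 1).re) := by
    have h := Complex.reCLM.hasSum hg2
    simpa only [Complex.reCLM_apply, Complex.ofReal_re] using h
  have him : (S - 1).im = 0 := by
    have h0 : HasSum (fun _ : ℕ => (0:ℝ)) ((S - 1).im) := by
      have h := Complex.imCLM.hasSum hg2
      simpa only [Complex.imCLM_apply, Complex.ofReal_im] using h
    simpa using h0.tsum_eq.symm.trans tsum_zero
  have htsum : ∑' n : ℕ, (-1:ℝ)^(n+1) * q^((n+1)^2) * Real.cos (((n:ℝ)+1) * π * lam)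
      = (S - 1).re / 2 := by
    have h2 := hre.div_const 2
    have h3 : (fun n : ℕ => 2 * ((-1:ℝ)^(n+1) * q^((n+1)^2) * Real.cos (((n:ℝ)+1) * π * lam)) / 2)
        = fun n : ℕ => (-1:ℝ)^(n+1) * q^((n+1)^2) * Real.cos (((n:ℝ)+1) * π * lam) := by
      funext n; ring
    rw [h3] at h2
    exact h2.tsum_eq
  have hT : Tfun q lam = S.re := by
    rw [Tfun, htsum]
    have : (S - 1).re = S.re - 1 := by simp
    rw [this]
    ring
  apply Complex.ext
  · simp [hT]
  · have h5 : S.im = 0 := by simpa using him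
    simp [h5]

end Elims2

section PartF
variable {q : ℝ}

lemma tendsto_Ffin_real (hq0 : 0 < q) (hq1 : q < 1) (lam : ℝ) :
    Tendsto (fun m => Ffin m q lam) atTop (nhds ((C0 (q^2))⁻¹ * Tfun q lam)) := by
  have h1 := tendsto_Ffin_complex hq0 hq1 lam
  have h2 : ∑' i : ℤ, ((((C0 (q^2))⁻¹ * q^(i.natAbs^2)) : ℝ) : ℂ) * xu lam ^ i
      = (((C0 (q^2))⁻¹ * Tfun q lam : ℝ) : ℂ) := by
    have h3 : ∀ i : ℤ, ((((C0 (q^2))⁻¹ * q^(i.natAbs^2)) : ℝ) : ℂ) * xu lam ^ i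
        = (((C0 (q^2))⁻¹ : ℝ) : ℂ) * ((((q^(i.natAbs^2)) : ℝ) : ℂ) * xu lam ^ i) := by
      intro i; push_cast; ring
    rw [funext h3, tsum_mul_left, tsum_id hq0 hq1 lam, ← Complex.ofReal_mul]
  rw [h2] at h1
  have := (Complex.reCLM.continuous.tendsto _).comp h1
  simpa only [Function.comp_def, Complex.reCLM_apply, Complex.ofReal_re] using this

lemma gfac_pos {c r : ℝ} (hc : c ≤ 1) (h0 : 0 < r) (h1 : r < 1) : 0 < 1 - 2*c*r + r^2 := by
  nlinarith

lemma gfac_ge {c r : ℝ} (hc : c ≤ 1) (h0 : 0 ≤ r) : (1-r)^2 ≤ 1 - 2*c*r + r^2 := by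
  nlinarith

lemma prod_odd_ge (hq0 : 0 < q) (hq1 : q < 1) (m : ℕ) :
    Dprod (2*m) q ≤ ∏ n ∈ range m, (1 - q^(2*n+1)) := by
  induction m with
  | zero => simp [Dprod]
  | succ m ih =>
    rw [Finset.prod_range_succ]
    have h2 : Dprod (2*(m+1)) q = Dprod (2*m) q * ((1 - q^(2*m+1)) * (1 - q^(2*m+2))) := by
      rw [show 2*(m+1) = (2*m) + 1 + 1 by ring, Dprod, Dprod,
        Finset.prod_range_succ, Finset.prod_range_succ]
      ring_nf
    rw [h2]
    have hodd : (0:ℝ) < 1 - q^(2*m+1) := by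
      have : q^(2*m+1) < 1 := pow_lt_one₀ hq0.le hq1 (by omega)
      linarith
    have heven : 1 - q^(2*m+2) ≤ 1 := by
      have : (0:ℝ) ≤ q^(2*m+2) := by positivity
      linarith
    calc Dprod (2*m) q * ((1 - q^(2*m+1)) * (1 - q^(2*m+2)))
        ≤ Dprod (2*m) q * ((1 - q^(2*m+1)) * 1) := by
          apply mul_le_mul_of_nonneg_left _ (le_of_lt (by exact Dprod_pos hq0 hq1 (2*m)))
          apply mul_le_mul_of_nonneg_left heven hodd.le
      _ = Dprod (2*m) q * (1 - q^(2*m+1)) := by ring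
      _ ≤ (∏ n ∈ range m, (1 - q^(2*n+1))) * (1 - q^(2*m+1)) := by
          apply mul_le_mul_of_nonneg_right ih hodd.le

lemma Ffin_lower (hq0 : 0 < q) (hq1 : q < 1) (lam : ℝ) (m : ℕ) :
    (C0 q)^2 ≤ Ffin m q lam := by
  have h1 : ∀ n ∈ range m, (1 - q^(2*n+1))^2 ≤ 1 - 2*Real.cos (π*lam)*q^(2*n+1) + q^(2*(2*n+1)) := by
    intro n _
    have := gfac_ge (c := Real.cos (π*lam)) (r := q^(2*n+1)) (Real.cos_le_one _) (by positivity)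
    calc (1 - q^(2*n+1))^2 ≤ 1 - 2*Real.cos (π*lam)*q^(2*n+1) + (q^(2*n+1))^2 := this
      _ = 1 - 2*Real.cos (π*lam)*q^(2*n+1) + q^(2*(2*n+1)) := by rw [← pow_mul]; ring_nf
  have h2 : ∏ n ∈ range m, (1 - q^(2*n+1))^2 ≤ Ffin m q lam :=
    Finset.prod_le_prod (fun n _ => by positivity) h1
  have h3 : (Dprod (2*m) q)^2 ≤ ∏ n ∈ range m, (1 - q^(2*n+1))^2 := by
    rw [Finset.prod_pow]
    exact pow_le_pow_left₀ (Dprod_pos hq0 hq1 (2*m)).le (prod_odd_ge hq0 hq1 m) 2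
  have h4 : (C0 q)^2 ≤ (Dprod (2*m) q)^2 :=
    pow_le_pow_left₀ C0_pos.le (C0_le_Dprod hq0 hq1 (2*m)) 2
  linarith

lemma Tfun_pos (hq0 : 0 < q) (hq1 : q < 1) (lam : ℝ) : 0 < Tfun q lam := by
  have hQ0 : 0 < q^2 := by positivity
  have hQ1 : q^2 < 1 := by nlinarith
  have hlim := tendsto_Ffin_real hq0 hq1 lam
  have hge : (C0 q)^2 ≤ (C0 (q^2))⁻¹ * Tfun q lam :=
    ge_of_tendsto hlim (Filter.Eventually.of_forall (Ffin_lower hq0 hq1 lam))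
  have hC2 : 0 < C0 (q^2) := C0_pos
  have hC : (0:ℝ) < (C0 q)^2 := pow_pos C0_pos 2
  have h6 : 0 < (C0 (q^2))⁻¹ * Tfun q lam := lt_of_lt_of_le hC hge
  have h7 : (C0 (q^2))⁻¹ * Tfun q lam * C0 (q^2) = Tfun q lam := by field_simp
  have h8 := mul_pos h6 hC2
  rwa [h7] at h8

end PartF

section PartG

lemma factor_ineq {c1 c2 r r' : ℝ} (hc : c2 < c1) (h0 : 0 < r) (hrr' : r < r') (hr' : r' < 1) :
    (1 - 2*c1*r' + r'^2) * (1 - 2*c2*r + r^2) < (1 - 2*c1*r + r^2) * (1 - 2*c2*r' + r'^2) := by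
  have key : (1 - 2*c1*r + r^2) * (1 - 2*c2*r' + r'^2)
      - (1 - 2*c1*r' + r'^2) * (1 - 2*c2*r + r^2)
      = 2*(c1-c2)*(r'-r)*(1-r*r') := by ring
  nlinarith [mul_pos (mul_pos (mul_pos (by linarith : (0:ℝ) < 2) (by linarith : (0:ℝ) < c1 - c2))
    (by linarith : (0:ℝ) < r' - r)) (by nlinarith : (0:ℝ) < 1 - r*r')]

/-- `(C0 (q^2))⁻¹ * Tfun q lam`, the limit of `Ffin`. -/
noncomputable def PT (q lam : ℝ) : ℝ := (C0 (q^2))⁻¹ * Tfun q lam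

lemma tendsto_Ffin_PT {q : ℝ} (hq0 : 0 < q) (hq1 : q < 1) (lam : ℝ) :
    Tendsto (fun m => Ffin (m+1) q lam) atTop (nhds (PT q lam)) :=
  (tendsto_Ffin_real hq0 hq1 lam).comp (Filter.tendsto_add_atTop_nat 1)

lemma PT_pos {q : ℝ} (hq0 : 0 < q) (hq1 : q < 1) (lam : ℝ) : 0 < PT q lam := by
  have hge : (C0 q)^2 ≤ (C0 (q^2))⁻¹ * Tfun q lam :=
    ge_of_tendsto (tendsto_Ffin_real hq0 hq1 lam)
      (Filter.Eventually.of_forall (Ffin_lower hq0 hq1 lam))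
  exact lt_of_lt_of_le (pow_pos C0_pos 2) hge

lemma Ffin_cross {q q' : ℝ} (hq0 : 0 < q) (hqq' : q < q') (hq'1 : q' < 1)
    {lam mu : ℝ} (hc : Real.cos (π*mu) < Real.cos (π*lam)) (m : ℕ) :
    Ffin (m+1) q' lam * Ffin (m+1) q mu
      ≤ ((1 - 2*Real.cos (π*lam)*q' + q'^2) * (1 - 2*Real.cos (π*mu)*q + q^2))
        / ((1 - 2*Real.cos (π*lam)*q + q^2) * (1 - 2*Real.cos (π*mu)*q' + q'^2))
        * (Ffin (m+1) q lam * Ffin (m+1) q' mu) := by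
  set c1 := Real.cos (π*lam)
  set c2 := Real.cos (π*mu)
  have hc1 : c1 ≤ 1 := Real.cos_le_one _
  have hc2 : c2 ≤ 1 := Real.cos_le_one _
  have hq'0 : 0 < q' := lt_trans hq0 hqq'
  have hq1 : q < 1 := lt_trans hqq' hq'1
  have hpow : ∀ n : ℕ, 0 < q^n ∧ q^n < 1 ∨ True := fun _ => Or.inr trivial
  -- positivity of the four n=0 factors
  have pA : 0 < 1 - 2*c1*q + q^2 := gfac_pos hc1 hq0 hq1
  have pB : 0 < 1 - 2*c2*q' + q'^2 := gfac_pos hc2 hq'0 hq'1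
  have pa : 0 < 1 - 2*c1*q' + q'^2 := gfac_pos hc1 hq'0 hq'1
  have pb : 0 < 1 - 2*c2*q + q^2 := gfac_pos hc2 hq0 hq1
  -- expand the products
  have expand : ∀ (r : ℝ) (c : ℝ), 0 < r → r < 1 →
      Ffin (m+1) r (0:ℝ) = Ffin (m+1) r 0 := fun _ _ _ _ => rfl
  have hsplit : ∀ (r : ℝ) (l : ℝ),
      Ffin (m+1) r l = (∏ n ∈ range m, (1 - 2*Real.cos (π*l)*r^(2*(n+1)+1) + r^(2*(2*(n+1)+1))))
        * (1 - 2*Real.cos (π*l)*r + r^2) := by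
    intro r l
    rw [Ffin, Finset.prod_range_succ']
    congr 1
    norm_num
  have hterm : ∀ n ∈ range m,
      (1 - 2*c1*q'^(2*(n+1)+1) + q'^(2*(2*(n+1)+1))) * (1 - 2*c2*q^(2*(n+1)+1) + q^(2*(2*(n+1)+1)))
        ≤ (1 - 2*c1*q^(2*(n+1)+1) + q^(2*(2*(n+1)+1))) * (1 - 2*c2*q'^(2*(n+1)+1) + q'^(2*(2*(n+1)+1))) := by
    intro n _
    have h0 : 0 < q^(2*(n+1)+1) := by positivity
    have hlt : q^(2*(n+1)+1) < q'^(2*(n+1)+1) := by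
      apply pow_lt_pow_left₀ hqq' hq0.le
      omega
    have h1 : q'^(2*(n+1)+1) < 1 := pow_lt_one₀ hq'0.le hq'1 (by omega)
    have := (factor_ineq hc h0 hlt h1).le
    calc (1 - 2*c1*q'^(2*(n+1)+1) + q'^(2*(2*(n+1)+1))) * (1 - 2*c2*q^(2*(n+1)+1) + q^(2*(2*(n+1)+1)))
        = (1 - 2*c1*q'^(2*(n+1)+1) + (q'^(2*(n+1)+1))^2) * (1 - 2*c2*q^(2*(n+1)+1) + (q^(2*(n+1)+1))^2) := by
          rw [← pow_mul, ← pow_mul]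
          ring_nf
      _ ≤ (1 - 2*c1*q^(2*(n+1)+1) + (q^(2*(n+1)+1))^2) * (1 - 2*c2*q'^(2*(n+1)+1) + (q'^(2*(n+1)+1))^2) := this
      _ = _ := by rw [← pow_mul, ← pow_mul]; ring_nf
  -- product inequality over tails
  have htails : (∏ n ∈ range m, (1 - 2*c1*q'^(2*(n+1)+1) + q'^(2*(2*(n+1)+1))))
      * (∏ n ∈ range m, (1 - 2*c2*q^(2*(n+1)+1) + q^(2*(2*(n+1)+1))))
      ≤ (∏ n ∈ range m, (1 - 2*c1*q^(2*(n+1)+1) + q^(2*(2*(n+1)+1))))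
      * (∏ n ∈ range m, (1 - 2*c2*q'^(2*(n+1)+1) + q'^(2*(2*(n+1)+1)))) := by
    rw [← Finset.prod_mul_distrib, ← Finset.prod_mul_distrib]
    apply Finset.prod_le_prod (fun n _ => ?_) hterm
    have e1 : (1:ℝ) - 2*c1*q'^(2*(n+1)+1) + q'^(2*(2*(n+1)+1))
        = 1 - 2*c1*q'^(2*(n+1)+1) + (q'^(2*(n+1)+1))^2 := by rw [← pow_mul]; ring_nf
    have e2 : (1:ℝ) - 2*c2*q^(2*(n+1)+1) + q^(2*(2*(n+1)+1))
        = 1 - 2*c2*q^(2*(n+1)+1) + (q^(2*(n+1)+1))^2 := by rw [← pow_mul]; ring_nf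
    rw [e1, e2]
    have g1 := gfac_pos hc1 (show 0 < q'^(2*(n+1)+1) by positivity) (pow_lt_one₀ hq'0.le hq'1 (by omega))
    have g2 := gfac_pos hc2 (show 0 < q^(2*(n+1)+1) by positivity) (pow_lt_one₀ hq0.le hq1 (by omega))
    exact (mul_pos g1 g2).le
  -- combine
  rw [hsplit q' lam, hsplit q mu, hsplit q lam, hsplit q' mu]
  set Pa := ∏ n ∈ range m, (1 - 2*Real.cos (π*lam)*q'^(2*(n+1)+1) + q'^(2*(2*(n+1)+1)))
  set Pb := ∏ n ∈ range m, (1 - 2*Real.cos (π*mu)*q^(2*(n+1)+1) + q^(2*(2*(n+1)+1)))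
  set PA := ∏ n ∈ range m, (1 - 2*Real.cos (π*lam)*q^(2*(n+1)+1) + q^(2*(2*(n+1)+1)))
  set PB := ∏ n ∈ range m, (1 - 2*Real.cos (π*mu)*q'^(2*(n+1)+1) + q'^(2*(2*(n+1)+1)))
  have hk : (1 - 2*c1*q' + q'^2) * (1 - 2*c2*q + q^2)
        / ((1 - 2*c1*q + q^2) * (1 - 2*c2*q' + q'^2))
        * ((PA * (1 - 2*c1*q + q^2)) * (PB * (1 - 2*c2*q' + q'^2)))
      = (PA * PB) * ((1 - 2*c1*q' + q'^2) * (1 - 2*c2*q + q^2)) := by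
    rw [div_mul_eq_mul_div, div_eq_iff (mul_pos pA pB).ne']
    ring
  calc Pa * (1 - 2*c1*q' + q'^2) * (Pb * (1 - 2*c2*q + q^2))
      = (Pa * Pb) * ((1 - 2*c1*q' + q'^2) * (1 - 2*c2*q + q^2)) := by ring
    _ ≤ (PA * PB) * ((1 - 2*c1*q' + q'^2) * (1 - 2*c2*q + q^2)) := by
        apply mul_le_mul_of_nonneg_right htails (mul_pos pa pb).le
    _ = _ := hk.symm

end PartG

section PartH

lemma Tfun_cross {q q' : ℝ} (hq0 : 0 < q) (hqq' : q < q') (hq'1 : q' < 1)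
    {lam mu : ℝ} (hc : Real.cos (π*mu) < Real.cos (π*lam)) :
    Tfun q' lam * Tfun q mu < Tfun q lam * Tfun q' mu := by
  set c1 := Real.cos (π*lam)
  set c2 := Real.cos (π*mu)
  have hq'0 : 0 < q' := lt_trans hq0 hqq'
  have hq1 : q < 1 := lt_trans hqq' hq'1
  have hc1 : c1 ≤ 1 := Real.cos_le_one _
  have hc2 : c2 ≤ 1 := Real.cos_le_one _
  have pA : 0 < 1 - 2*c1*q + q^2 := gfac_pos hc1 hq0 hq1
  have pB : 0 < 1 - 2*c2*q' + q'^2 := gfac_pos hc2 hq'0 hq'1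
  have pa : 0 < 1 - 2*c1*q' + q'^2 := gfac_pos hc1 hq'0 hq'1
  have pb : 0 < 1 - 2*c2*q + q^2 := gfac_pos hc2 hq0 hq1
  set kap := ((1 - 2*c1*q' + q'^2) * (1 - 2*c2*q + q^2))
      / ((1 - 2*c1*q + q^2) * (1 - 2*c2*q' + q'^2)) with hkap
  have hkap1 : kap < 1 := by
    rw [hkap, div_lt_one (mul_pos pA pB)]
    exact factor_ineq hc hq0 hqq' hq'1
  -- limit comparison
  have hA : Tendsto (fun m => Ffin (m+1) q' lam * Ffin (m+1) q mu) atTop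
      (nhds (PT q' lam * PT q mu)) :=
    (tendsto_Ffin_PT hq'0 hq'1 lam).mul (tendsto_Ffin_PT hq0 hq1 mu)
  have hB : Tendsto (fun m => kap * (Ffin (m+1) q lam * Ffin (m+1) q' mu)) atTop
      (nhds (kap * (PT q lam * PT q' mu))) :=
    ((tendsto_Ffin_PT hq0 hq1 lam).mul (tendsto_Ffin_PT hq'0 hq'1 mu)).const_mul kap
  have hle : PT q' lam * PT q mu ≤ kap * (PT q lam * PT q' mu) :=
    le_of_tendsto_of_tendsto' hA hB (fun m => Ffin_cross hq0 hqq' hq'1 hc m)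
  have hPTpos : 0 < PT q lam * PT q' mu := mul_pos (PT_pos hq0 hq1 lam) (PT_pos hq'0 hq'1 mu)
  have hPT : PT q' lam * PT q mu < PT q lam * PT q' mu :=
    lt_of_le_of_lt hle (by nlinarith)
  -- convert to Tfun
  have hC2 : 0 < C0 (q^2) := C0_pos
  have hC2' : 0 < C0 (q'^2) := C0_pos
  have hTq : ∀ l : ℝ, Tfun q l = C0 (q^2) * PT q l := by
    intro l; rw [PT]; field_simp
  have hTq' : ∀ l : ℝ, Tfun q' l = C0 (q'^2) * PT q' l := by
    intro l; rw [PT]; field_simp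
  calc Tfun q' lam * Tfun q mu = (C0 (q'^2) * C0 (q^2)) * (PT q' lam * PT q mu) := by
        rw [hTq', hTq]; ring
    _ < (C0 (q'^2) * C0 (q^2)) * (PT q lam * PT q' mu) :=
        mul_lt_mul_of_pos_left hPT (mul_pos hC2' hC2)
    _ = Tfun q lam * Tfun q' mu := by rw [hTq', hTq]; ring

lemma Tfun_ratio_lt {q q' : ℝ} (hq0 : 0 < q) (hqq' : q < q') (hq'1 : q' < 1)
    {lam mu : ℝ} (hc : Real.cos (π*mu) < Real.cos (π*lam)) :
    Tfun q' lam / Tfun q' mu < Tfun q lam / Tfun q mu := by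
  have hq'0 : 0 < q' := lt_trans hq0 hqq'
  have hq1 : q < 1 := lt_trans hqq' hq'1
  rw [div_lt_div_iff₀ (Tfun_pos hq'0 hq'1 mu) (Tfun_pos hq0 hq1 mu)]
  have := Tfun_cross hq0 hqq' hq'1 hc
  nlinarith [this]

end PartH

section EllKfacts
variable {k : ℝ}

lemma integrand_lower (hk0 : 0 ≤ k) (hk1 : k < 1) (θ : ℝ) :
    0 < 1 - k^2 * Real.sin θ ^ 2 := by
  have h1 : k^2 * Real.sin θ ^ 2 ≤ k^2 * 1 := by
    apply mul_le_mul_of_nonneg_left _ (by positivity)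
    rw [← one_pow 2]
    apply sq_le_sq'
    · linarith [Real.neg_one_le_sin θ]
    · exact Real.sin_le_one θ
  nlinarith

lemma integrand_continuous (hk0 : 0 ≤ k) (hk1 : k < 1) :
    Continuous (fun θ : ℝ => 1 / Real.sqrt (1 - k^2 * Real.sin θ ^ 2)) := by
  apply Continuous.div continuous_const
  · exact (Real.continuous_sqrt.comp (by continuity))
  · intro θ
    exact (Real.sqrt_pos.2 (integrand_lower hk0 hk1 θ)).ne'

lemma EllK_pos (hk0 : 0 ≤ k) (hk1 : k < 1) : 0 < EllK k := by
  apply intervalIntegral.intervalIntegral_pos_of_pos_on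
  · exact (integrand_continuous hk0 hk1).intervalIntegrable _ _
  · intro θ _
    have := integrand_lower hk0 hk1 θ
    positivity
  · positivity

lemma EllK_strictMono {k1 k2 : ℝ} (hk10 : 0 ≤ k1) (hk12 : k1 < k2) (hk21 : k2 < 1) :
    EllK k1 < EllK k2 := by
  have hk20 : 0 < k2 := lt_of_le_of_lt hk10 hk12
  have hk11 : k1 < 1 := lt_trans hk12 hk21
  have hint1 : IntervalIntegrable (fun θ => 1 / Real.sqrt (1 - k1^2 * Real.sin θ ^ 2))
      MeasureTheory.volume 0 (π/2) := (integrand_continuous hk10 hk11).intervalIntegrable _ _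
  have hint2 : IntervalIntegrable (fun θ => 1 / Real.sqrt (1 - k2^2 * Real.sin θ ^ 2))
      MeasureTheory.volume 0 (π/2) := (integrand_continuous hk20.le hk21).intervalIntegrable _ _
  have hdiff : 0 < ∫ θ in (0:ℝ)..(π/2),
      (1 / Real.sqrt (1 - k2^2 * Real.sin θ ^ 2) - 1 / Real.sqrt (1 - k1^2 * Real.sin θ ^ 2)) := by
    apply intervalIntegral.intervalIntegral_pos_of_pos_on (hint2.sub hint1)
    · intro θ hθ
      obtain ⟨hθ0, hθ1⟩ := hθ
      have hsin : 0 < Real.sin θ := Real.sin_pos_of_pos_of_lt_pi hθ0 (by linarith [Real.pi_pos])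
      have h1 := integrand_lower hk10 hk11 θ
      have h2 := integrand_lower hk20.le hk21 θ
      have hlt : 1 - k2^2 * Real.sin θ ^ 2 < 1 - k1^2 * Real.sin θ ^ 2 := by
        have h : k1^2 < k2^2 := by nlinarith
        nlinarith [mul_lt_mul_of_pos_right h (pow_pos hsin 2)]
      have hs : Real.sqrt (1 - k2^2 * Real.sin θ ^ 2) < Real.sqrt (1 - k1^2 * Real.sin θ ^ 2) :=
        Real.sqrt_lt_sqrt h2.le hlt
      have hs2 : 0 < Real.sqrt (1 - k2^2 * Real.sin θ ^ 2) := Real.sqrt_pos.2 h2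
      have := one_div_lt_one_div_of_lt hs2 hs
      linarith
    · positivity
  rw [intervalIntegral.integral_sub hint2 hint1] at hdiff
  rw [EllK, EllK]
  linarith

lemma nome_mem (hk0 : 0 < k) (hk1 : k < 1) : nome k ∈ Set.Ioo (0:ℝ) 1 := by
  have hks : Real.sqrt (1 - k^2) ∈ Set.Ioo (0:ℝ) 1 := by
    constructor
    · apply Real.sqrt_pos.2; nlinarith
    · have h := Real.sqrt_lt_sqrt (show (0:ℝ) ≤ 1 - k^2 by nlinarith) (show 1-k^2 < 1 by nlinarith)
      rwa [Real.sqrt_one] at h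
  have hK := EllK_pos hk0.le hk1
  have hK' := EllK_pos hks.1.le hks.2
  constructor
  · exact Real.exp_pos _
  · rw [nome, ← Real.exp_zero]
    apply Real.exp_lt_exp.2
    apply div_neg_of_neg_of_pos _ hK
    have : 0 < π * EllK' k := mul_pos Real.pi_pos hK'
    linarith

lemma nome_strictMono {k1 k2 : ℝ} (hk10 : 0 < k1) (hk12 : k1 < k2) (hk21 : k2 < 1) :
    nome k1 < nome k2 := by
  have hk20 : 0 < k2 := lt_trans hk10 hk12
  have hk11 : k1 < 1 := lt_trans hk12 hk21
  have hs1 : Real.sqrt (1 - k1^2) ∈ Set.Ioo (0:ℝ) 1 := by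
    constructor
    · apply Real.sqrt_pos.2; nlinarith
    · have h := Real.sqrt_lt_sqrt (show (0:ℝ) ≤ 1 - k1^2 by nlinarith) (show 1-k1^2 < 1 by nlinarith)
      rwa [Real.sqrt_one] at h
  have hs2 : Real.sqrt (1 - k2^2) ∈ Set.Ioo (0:ℝ) 1 := by
    constructor
    · apply Real.sqrt_pos.2; nlinarith
    · have h := Real.sqrt_lt_sqrt (show (0:ℝ) ≤ 1 - k2^2 by nlinarith) (show 1-k2^2 < 1 by nlinarith)
      rwa [Real.sqrt_one] at h
  have hss : Real.sqrt (1 - k2^2) < Real.sqrt (1 - k1^2) :=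
    Real.sqrt_lt_sqrt (by nlinarith) (by nlinarith)
  have hK1 := EllK_pos hk10.le hk11
  have hK2 := EllK_pos hk20.le hk21
  have hK12 : EllK k1 < EllK k2 := EllK_strictMono hk10.le hk12 hk21
  have hK'1 := EllK_pos hs1.1.le hs1.2
  have hK'2 := EllK_pos hs2.1.le hs2.2
  have hK'21 : EllK (Real.sqrt (1 - k2^2)) < EllK (Real.sqrt (1 - k1^2)) :=
    EllK_strictMono hs2.1.le hss hs1.2
  rw [nome, nome]
  apply Real.exp_lt_exp.2
  rw [div_lt_div_iff₀ hK1 hK2]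
  rw [EllK', EllK']
  have h1 : 0 < π := Real.pi_pos
  nlinarith [mul_lt_mul'' hK'21 hK12 hK'2.le hK1.le]
end EllKfacts

end ThetaAux

theorem stmt_0 (lam mu : ℝ) (h : Real.cos (lam * π) > Real.cos (mu * π)) :
    (∀ k ∈ Set.Ioo (0:ℝ) 1,
      0 < JTheta (lam * EllK k) k / JTheta (mu * EllK k) k) ∧
    StrictAntiOn (fun k => JTheta (lam * EllK k) k / JTheta (mu * EllK k) k)
      (Set.Ioo (0:ℝ) 1) := by
  have hc : Real.cos (π*mu) < Real.cos (π*lam) := by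
    rw [mul_comm π mu, mul_comm π lam]; exact h
  have hglue : ∀ l : ℝ, ∀ k ∈ Set.Ioo (0:ℝ) 1, JTheta (l * EllK k) k = Tfun (nome k) l := by
    intro l k hk
    have hK : EllK k ≠ 0 := (EllK_pos hk.1.le hk.2).ne'
    rw [JTheta, Tfun]
    congr 1
    congr 1
    apply tsum_congr
    intro n
    congr 2
    field_simp
  constructor
  · intro k hk
    have hq := nome_mem hk.1 hk.2
    rw [hglue lam k hk, hglue mu k hk]
    exact div_pos (Tfun_pos hq.1 hq.2 lam) (Tfun_pos hq.1 hq.2 mu)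
  · intro k1 hk1 k2 hk2 h12
    simp only
    rw [hglue lam k1 hk1, hglue mu k1 hk1, hglue lam k2 hk2, hglue mu k2 hk2]
    have hq1 := nome_mem hk1.1 hk1.2
    have hq2 := nome_mem hk2.1 hk2.2
    exact Tfun_ratio_lt hq1.1 (nome_strictMono hk1.1 h12 hk2.2) hq2.2 hc
end

section
/- For each k ∈ (0,1), the function K is differentiable at k with derivative dK/dk = (E(k) − k'²K(k))/(k k'²), where k' = √(1−k²). -/
open Real

open intervalIntegral MeasureTheory Metric

-- positivity of Δ
lemma my_delta_pos {x : ℝ} (hx : x^2 < 1) (θ : ℝ) : 0 < 1 - x^2 * Real.sin θ ^ 2 := by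
  nlinarith [Real.sin_sq_le_one θ, sq_nonneg x, sq_nonneg (Real.sin θ)]

-- derivative in the parameter
lemma my_hasDerivAt_F {x : ℝ} (θ : ℝ) (hx : x^2 < 1) :
    HasDerivAt (fun y => 1 / Real.sqrt (1 - y^2 * Real.sin θ ^ 2))
      (x * Real.sin θ ^ 2 / Real.sqrt (1 - x^2 * Real.sin θ ^ 2) ^ 3) x := by
  have hΔ := my_delta_pos hx θ
  have hs : 0 < Real.sqrt (1 - x^2 * Real.sin θ ^ 2) := Real.sqrt_pos.2 hΔ
  have hu : HasDerivAt (fun y : ℝ => 1 - y^2 * Real.sin θ ^ 2) (-(2*x*Real.sin θ ^ 2)) x := by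
    have := ((hasDerivAt_pow 2 x).mul_const (Real.sin θ ^ 2)).const_sub 1
    exact this.congr_deriv (by ring)
  have hsq := hu.sqrt (ne_of_gt hΔ)
  have h := (hasDerivAt_const x (1:ℝ)).div hsq hs.ne'
  refine h.congr_deriv ?_
  have h2 : Real.sqrt (1 - x^2 * Real.sin θ ^ 2) ^ 2 = 1 - x^2 * Real.sin θ ^ 2 :=
    Real.sq_sqrt hΔ.le
  field_simp
  ring

lemma my_hasDerivAt_g {k : ℝ} (hk2 : k^2 < 1) (θ : ℝ) :
    HasDerivAt (fun t => k^2 * (Real.sin t * Real.cos t) / Real.sqrt (1 - k^2 * Real.sin t ^ 2))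
      (k^2 * (Real.cos θ ^ 2 - Real.sin θ ^ 2) / Real.sqrt (1 - k^2 * Real.sin θ ^ 2)
        + k^4 * (Real.sin θ ^ 2 * Real.cos θ ^ 2) / Real.sqrt (1 - k^2 * Real.sin θ ^ 2) ^ 3) θ := by
  have hΔ := my_delta_pos hk2 θ
  have hs : 0 < Real.sqrt (1 - k^2 * Real.sin θ ^ 2) := Real.sqrt_pos.2 hΔ
  have hn : HasDerivAt (fun t => k^2 * (Real.sin t * Real.cos t))
      (k^2 * (Real.cos θ ^ 2 - Real.sin θ ^ 2)) θ := by
    have := ((Real.hasDerivAt_sin θ).mul (Real.hasDerivAt_cos θ)).const_mul (k^2)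
    exact this.congr_deriv (by ring)
  have hu : HasDerivAt (fun t : ℝ => 1 - k^2 * Real.sin t ^ 2)
      (-(k^2 * (2 * Real.sin θ * Real.cos θ))) θ := by
    have := (((Real.hasDerivAt_sin θ).pow 2).const_mul (k^2)).const_sub 1
    exact this.congr_deriv (by ring)
  have hsq := hu.sqrt (ne_of_gt hΔ)
  have h := hn.div hsq hs.ne'
  refine h.congr_deriv ?_
  have h2 : Real.sqrt (1 - k^2 * Real.sin θ ^ 2) ^ 2 = 1 - k^2 * Real.sin θ ^ 2 :=
    Real.sq_sqrt hΔ.le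
  have h4 : Real.sqrt (1 - k^2 * Real.sin θ ^ 2) ^ 4 = (1 - k^2 * Real.sin θ ^ 2)^2 := by
    rw [show (4:ℕ) = 2*2 by norm_num, pow_mul, h2]
  have h6 : Real.sqrt (1 - k^2 * Real.sin θ ^ 2) ^ 6 = (1 - k^2 * Real.sin θ ^ 2)^3 := by
    rw [show (6:ℕ) = 2*3 by norm_num, pow_mul, h2]
  have hc2 : Real.cos θ ^ 2 = 1 - Real.sin θ ^ 2 := Real.cos_sq' θ
  field_simp
  ring_nf

lemma my_key {k : ℝ} (hk0 : 0 < k) (hk2 : k^2 < 1) (θ : ℝ) :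
    k * Real.sin θ ^ 2 / Real.sqrt (1 - k^2 * Real.sin θ ^ 2) ^ 3 =
      (1/(k*(1-k^2))) * Real.sqrt (1 - k^2 * Real.sin θ ^ 2)
      - (1/k) * (1 / Real.sqrt (1 - k^2 * Real.sin θ ^ 2))
      - (1/(k*(1-k^2))) *
        (k^2 * (Real.cos θ ^ 2 - Real.sin θ ^ 2) / Real.sqrt (1 - k^2 * Real.sin θ ^ 2)
          + k^4 * (Real.sin θ ^ 2 * Real.cos θ ^ 2) / Real.sqrt (1 - k^2 * Real.sin θ ^ 2) ^ 3) := by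
  have hΔ := my_delta_pos hk2 θ
  have hs : 0 < Real.sqrt (1 - k^2 * Real.sin θ ^ 2) := Real.sqrt_pos.2 hΔ
  have h2 : Real.sqrt (1 - k^2 * Real.sin θ ^ 2) ^ 2 = 1 - k^2 * Real.sin θ ^ 2 :=
    Real.sq_sqrt hΔ.le
  have hc : Real.sin θ ^ 2 + Real.cos θ ^ 2 = 1 := Real.sin_sq_add_cos_sq θ
  have hk1 : (1:ℝ) - k^2 ≠ 0 := by nlinarith
  have h5 : Real.sqrt (1 - k^2 * Real.sin θ ^ 2) ^ 5
      = Real.sqrt (1 - k^2 * Real.sin θ ^ 2) * (1 - k^2 * Real.sin θ ^ 2)^2 := by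
    rw [show (5:ℕ) = 1 + 2*2 by norm_num, pow_add, pow_mul, h2, pow_one]
  have h7 : Real.sqrt (1 - k^2 * Real.sin θ ^ 2) ^ 7
      = Real.sqrt (1 - k^2 * Real.sin θ ^ 2) * (1 - k^2 * Real.sin θ ^ 2)^3 := by
    rw [show (7:ℕ) = 1 + 2*3 by norm_num, pow_add, pow_mul, h2, pow_one]
  have h9 : Real.sqrt (1 - k^2 * Real.sin θ ^ 2) ^ 9
      = Real.sqrt (1 - k^2 * Real.sin θ ^ 2) * (1 - k^2 * Real.sin θ ^ 2)^4 := by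
    rw [show (9:ℕ) = 1 + 2*4 by norm_num, pow_add, pow_mul, h2, pow_one]
  have hc2 : Real.cos θ ^ 2 = 1 - Real.sin θ ^ 2 := Real.cos_sq' θ
  field_simp
  ring_nf
  rw [hc2]
  linear_combination (-(k^2*Real.sin θ^2 + k^2 - k^2*(1-Real.sin θ^2) - 1
    + Real.sqrt (1 - k^2 * Real.sin θ ^ 2)^2 + (1 - k^2 * Real.sin θ ^ 2))) * h2

lemma my_contS {x : ℝ} : Continuous fun θ => Real.sqrt (1 - x^2 * Real.sin θ ^ 2) :=
  (continuous_const.sub (continuous_const.mul (Real.continuous_sin.pow 2))).sqrt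

lemma my_contF {x : ℝ} (hx : x^2 < 1) :
    Continuous fun θ => 1 / Real.sqrt (1 - x^2 * Real.sin θ ^ 2) :=
  continuous_const.div my_contS fun θ => (Real.sqrt_pos.2 (my_delta_pos hx θ)).ne'

lemma my_contF' {x : ℝ} (hx : x^2 < 1) :
    Continuous fun θ => x * Real.sin θ ^ 2 / Real.sqrt (1 - x^2 * Real.sin θ ^ 2) ^ 3 :=
  (continuous_const.mul (Real.continuous_sin.pow 2)).div (my_contS.pow 3)
    fun θ => pow_ne_zero _ (Real.sqrt_pos.2 (my_delta_pos hx θ)).ne'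

lemma my_contg' {k : ℝ} (hk2 : k^2 < 1) :
    Continuous fun θ =>
      k^2 * (Real.cos θ ^ 2 - Real.sin θ ^ 2) / Real.sqrt (1 - k^2 * Real.sin θ ^ 2)
        + k^4 * (Real.sin θ ^ 2 * Real.cos θ ^ 2) / Real.sqrt (1 - k^2 * Real.sin θ ^ 2) ^ 3 := by
  apply Continuous.add
  · exact (continuous_const.mul ((Real.continuous_cos.pow 2).sub (Real.continuous_sin.pow 2))).div
      my_contS fun θ => (Real.sqrt_pos.2 (my_delta_pos hk2 θ)).ne'
  · exact (continuous_const.mul ((Real.continuous_sin.pow 2).mul (Real.continuous_cos.pow 2))).div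
      (my_contS.pow 3) fun θ => pow_ne_zero _ (Real.sqrt_pos.2 (my_delta_pos hk2 θ)).ne'

set_option maxHeartbeats 1000000 in
theorem stmt_6 (k : ℝ) (hk : k ∈ Set.Ioo (0:ℝ) 1) :
    HasDerivAt EllK
      ((EllE k - Real.sqrt (1 - k^2) ^ 2 * EllK k) / (k * Real.sqrt (1 - k^2) ^ 2)) k := by
  obtain ⟨hk0, hk1⟩ := hk
  have hk2 : k^2 < 1 := by nlinarith
  set ε : ℝ := (1-k)/2 with hεdef
  have hε : 0 < ε := by simp only [hεdef]; linarith
  set m : ℝ := (1+k)/2 with hmdef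
  have hm0 : 0 < m := by simp only [hmdef]; linarith
  have hm2 : m^2 < 1 := by nlinarith
  have hxm : ∀ x ∈ ball k ε, |x| ≤ m := by
    intro x hx
    have h := abs_lt.1 (mem_ball_iff_norm.1 hx)
    rw [abs_le]
    constructor <;> simp only [hmdef, hεdef] at * <;> [nlinarith; nlinarith]
  have hx2m : ∀ x ∈ ball k ε, x^2 ≤ m^2 := by
    intro x hx
    have := hxm x hx
    nlinarith [abs_nonneg x, sq_abs x]
  have hx2 : ∀ x ∈ ball k ε, x^2 < 1 := fun x hx => lt_of_le_of_lt (hx2m x hx) hm2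
  have hmeas : ∀ᶠ x in nhds k, MeasureTheory.AEStronglyMeasurable
      (fun θ => 1 / Real.sqrt (1 - x^2 * Real.sin θ ^ 2))
      (MeasureTheory.volume.restrict (Set.uIoc 0 (π/2))) :=
    Filter.Eventually.of_forall fun x =>
      ((measurable_const.div my_contS.measurable).aestronglyMeasurable)
  have hFint : IntervalIntegrable (fun θ => 1 / Real.sqrt (1 - k^2 * Real.sin θ ^ 2))
      MeasureTheory.volume 0 (π/2) := (my_contF hk2).intervalIntegrable _ _
  have hF'meas : MeasureTheory.AEStronglyMeasurable
      (fun θ => k * Real.sin θ ^ 2 / Real.sqrt (1 - k^2 * Real.sin θ ^ 2) ^ 3)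
      (MeasureTheory.volume.restrict (Set.uIoc 0 (π/2))) :=
    (my_contF' hk2).aestronglyMeasurable
  have hbound : ∀ᵐ θ ∂MeasureTheory.volume, θ ∈ Set.uIoc 0 (π/2) → ∀ x ∈ ball k ε,
      ‖x * Real.sin θ ^ 2 / Real.sqrt (1 - x^2 * Real.sin θ ^ 2) ^ 3‖
        ≤ m / Real.sqrt (1 - m^2) ^ 3 := by
    refine Filter.Eventually.of_forall fun θ _ x hx => ?_
    have hxx := hx2 x hx
    have hΔ := my_delta_pos hxx θ
    have hsq : (0:ℝ) < Real.sqrt (1 - x^2 * Real.sin θ ^ 2) := Real.sqrt_pos.2 hΔ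
    have hsm : (0:ℝ) < Real.sqrt (1 - m^2) := Real.sqrt_pos.2 (by nlinarith)
    rw [Real.norm_eq_abs, abs_div, abs_mul, abs_of_nonneg (sq_nonneg (Real.sin θ)),
      abs_of_pos (pow_pos hsq 3)]
    have h1 : Real.sqrt (1 - m^2) ^ 3 ≤ Real.sqrt (1 - x^2 * Real.sin θ ^ 2) ^ 3 := by
      apply pow_le_pow_left₀ (Real.sqrt_nonneg _)
      apply Real.sqrt_le_sqrt
      nlinarith [Real.sin_sq_le_one θ, sq_nonneg x, hx2m x hx]
    have h2 : |x| * Real.sin θ ^ 2 ≤ m * 1 :=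
      mul_le_mul (hxm x hx) (Real.sin_sq_le_one θ) (sq_nonneg _) hm0.le
    calc |x| * Real.sin θ ^ 2 / Real.sqrt (1 - x^2 * Real.sin θ ^ 2) ^ 3
        ≤ (m * 1) / Real.sqrt (1 - m^2) ^ 3 :=
          div_le_div₀ (by positivity) h2 (by positivity) h1
      _ = m / Real.sqrt (1 - m^2) ^ 3 := by ring
  have hbint : IntervalIntegrable (fun _ : ℝ => m / Real.sqrt (1 - m^2) ^ 3)
      MeasureTheory.volume 0 (π/2) := intervalIntegrable_const
  have hdiff : ∀ᵐ θ ∂MeasureTheory.volume, θ ∈ Set.uIoc 0 (π/2) → ∀ x ∈ ball k ε,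
      HasDerivAt (fun y => 1 / Real.sqrt (1 - y^2 * Real.sin θ ^ 2))
        (x * Real.sin θ ^ 2 / Real.sqrt (1 - x^2 * Real.sin θ ^ 2) ^ 3) x :=
    Filter.Eventually.of_forall fun θ _ x hx => my_hasDerivAt_F θ (hx2 x hx)
  have key := intervalIntegral.hasDerivAt_integral_of_dominated_loc_of_deriv_le
    (𝕜 := ℝ) (E := ℝ) (μ := MeasureTheory.volume) (a := 0) (b := π/2)
    (F := fun x θ => 1 / Real.sqrt (1 - x^2 * Real.sin θ ^ 2))
    (F' := fun x θ => x * Real.sin θ ^ 2 / Real.sqrt (1 - x^2 * Real.sin θ ^ 2) ^ 3)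
    (x₀ := k) (bound := fun _ => m / Real.sqrt (1 - m^2) ^ 3) (s := ball k ε)
    (ball_mem_nhds k hε) hmeas hFint hF'meas hbound hbint hdiff
  have hmain := key.2
  have hval : (∫ θ in (0:ℝ)..(π/2), k * Real.sin θ ^ 2 / Real.sqrt (1 - k^2 * Real.sin θ ^ 2) ^ 3)
      = (EllE k - Real.sqrt (1 - k^2) ^ 2 * EllK k) / (k * Real.sqrt (1 - k^2) ^ 2) := by
    have h1k2 : (0:ℝ) ≤ 1 - k^2 := by nlinarith
    rw [Real.sq_sqrt h1k2]
    have hcongr : Set.EqOn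
        (fun θ => k * Real.sin θ ^ 2 / Real.sqrt (1 - k^2 * Real.sin θ ^ 2) ^ 3)
        (fun θ => (1/(k*(1-k^2))) * Real.sqrt (1 - k^2 * Real.sin θ ^ 2)
          - (1/k) * (1 / Real.sqrt (1 - k^2 * Real.sin θ ^ 2))
          - (1/(k*(1-k^2))) *
            (k^2 * (Real.cos θ ^ 2 - Real.sin θ ^ 2) / Real.sqrt (1 - k^2 * Real.sin θ ^ 2)
              + k^4 * (Real.sin θ ^ 2 * Real.cos θ ^ 2) /
                  Real.sqrt (1 - k^2 * Real.sin θ ^ 2) ^ 3))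
        (Set.uIcc (0:ℝ) (π/2)) := fun θ _ => my_key hk0 hk2 θ
    rw [intervalIntegral.integral_congr hcongr]
    have i1 : IntervalIntegrable
        (fun θ => (1/(k*(1-k^2))) * Real.sqrt (1 - k^2 * Real.sin θ ^ 2))
        MeasureTheory.volume 0 (π/2) :=
      (continuous_const.mul my_contS).intervalIntegrable _ _
    have i2 : IntervalIntegrable
        (fun θ => (1/k) * (1 / Real.sqrt (1 - k^2 * Real.sin θ ^ 2)))
        MeasureTheory.volume 0 (π/2) :=
      (continuous_const.mul (my_contF hk2)).intervalIntegrable _ _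
    have i3 : IntervalIntegrable
        (fun θ => (1/(k*(1-k^2))) *
          (k^2 * (Real.cos θ ^ 2 - Real.sin θ ^ 2) / Real.sqrt (1 - k^2 * Real.sin θ ^ 2)
            + k^4 * (Real.sin θ ^ 2 * Real.cos θ ^ 2) /
                Real.sqrt (1 - k^2 * Real.sin θ ^ 2) ^ 3))
        MeasureTheory.volume 0 (π/2) :=
      (continuous_const.mul (my_contg' hk2)).intervalIntegrable _ _
    rw [intervalIntegral.integral_sub (i1.sub i2) i3, intervalIntegral.integral_sub i1 i2,
      intervalIntegral.integral_const_mul, intervalIntegral.integral_const_mul,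
      intervalIntegral.integral_const_mul]
    have hg : (∫ θ in (0:ℝ)..(π/2),
        (k^2 * (Real.cos θ ^ 2 - Real.sin θ ^ 2) / Real.sqrt (1 - k^2 * Real.sin θ ^ 2)
          + k^4 * (Real.sin θ ^ 2 * Real.cos θ ^ 2) /
              Real.sqrt (1 - k^2 * Real.sin θ ^ 2) ^ 3)) = 0 := by
      rw [intervalIntegral.integral_eq_sub_of_hasDerivAt
        (fun θ _ => my_hasDerivAt_g hk2 θ) ((my_contg' hk2).intervalIntegrable _ _)]
      simp
    rw [hg]
    have hE : (∫ θ in (0:ℝ)..(π/2), Real.sqrt (1 - k^2 * Real.sin θ ^ 2)) = EllE k := rfl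
    have hK : (∫ θ in (0:ℝ)..(π/2), 1 / Real.sqrt (1 - k^2 * Real.sin θ ^ 2)) = EllK k := rfl
    rw [hE, hK]
    have hne1 : k ≠ 0 := hk0.ne'
    have hne2 : (1:ℝ) - k^2 ≠ 0 := by nlinarith
    field_simp
    ring
  rw [hval] at hmain
  exact hmain
end

section
/- For each k ∈ (0,1), the function K'(k) := K(√(1−k²)) is differentiable at k with derivative dK'/dk = (k²K'(k) − E'(k))/(k k'²), where k' = √(1−k²) and E'(k) := E(k'). -/
open Real

section AuxEll

lemma aux_antider (m : ℝ) (hm0 : 0 ≤ m) (hm1 : m < 1) (θ : ℝ) :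
    HasDerivAt (fun t => -m * (Real.sin t * Real.cos t * (Real.sqrt (1 - m * Real.sin t ^ 2))⁻¹))
      ((1 - m) * ((Real.sqrt (1 - m * Real.sin θ ^ 2))⁻¹) ^ 3 - Real.sqrt (1 - m * Real.sin θ ^ 2))
      θ := by
  have hs2 := Real.sin_sq_le_one θ
  have hD : 0 < 1 - m * Real.sin θ ^ 2 := by nlinarith
  have hr : 0 < Real.sqrt (1 - m * Real.sin θ ^ 2) := Real.sqrt_pos.2 hD
  have hr2 : Real.sqrt (1 - m * Real.sin θ ^ 2) ^ 2 = 1 - m * Real.sin θ ^ 2 :=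
    Real.sq_sqrt hD.le
  have hg : HasDerivAt (fun t => 1 - m * Real.sin t ^ 2)
      (-(m * (2 * Real.sin θ ^ 1 * Real.cos θ))) θ :=
    (((Real.hasDerivAt_sin θ).pow 2).const_mul m).const_sub 1
  have hsq := hg.sqrt hD.ne'
  have hinv := hsq.inv hr.ne'
  have hsc : HasDerivAt (fun t => Real.sin t * Real.cos t)
      (Real.cos θ * Real.cos θ + Real.sin θ * (-Real.sin θ)) θ :=
    (Real.hasDerivAt_sin θ).mul (Real.hasDerivAt_cos θ)
  have h := (hsc.mul hinv).const_mul (-m)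
  refine h.congr_deriv ?_; symm; simp only [Pi.inv_apply]
  have hc : Real.cos θ ^ 2 = 1 - Real.sin θ ^ 2 := Real.cos_sq' θ
  have key : (1-m) - (1-m*Real.sin θ^2)^2
      = -m*((Real.cos θ^2 - Real.sin θ^2)*(1-m*Real.sin θ^2) + m*Real.sin θ^2*Real.cos θ^2) := by
    linear_combination m * hc
  set r := Real.sqrt (1 - m * Real.sin θ ^ 2)
  field_simp
  linear_combination key +
    ((m*(Real.cos θ^2 - Real.sin θ^2) - (r^2 + (1 - m*Real.sin θ^2)))) * hr2

lemma aux_Dpos (m : ℝ) (hm0 : 0 ≤ m) (hm1 : m < 1) (θ : ℝ) :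
    0 < 1 - m * Real.sin θ ^ 2 := by nlinarith [Real.sin_sq_le_one θ, sq_nonneg (Real.sin θ)]

lemma aux_contSqrtD (m : ℝ) : Continuous fun θ => Real.sqrt (1 - m * Real.sin θ ^ 2) :=
  Continuous.sqrt (continuous_const.sub (continuous_const.mul (Real.continuous_sin.pow 2)))

lemma aux_contInvD (m : ℝ) (hm0 : 0 ≤ m) (hm1 : m < 1) :
    Continuous fun θ => (Real.sqrt (1 - m * Real.sin θ ^ 2))⁻¹ :=
  (aux_contSqrtD m).inv₀ fun θ => (Real.sqrt_pos.2 (aux_Dpos m hm0 hm1 θ)).ne'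

lemma aux_intII (m : ℝ) (hm0 : 0 ≤ m) (hm1 : m < 1) :
    (1 - m) * (∫ θ in (0:ℝ)..(π/2), ((Real.sqrt (1 - m * Real.sin θ ^ 2))⁻¹) ^ 3)
      = ∫ θ in (0:ℝ)..(π/2), Real.sqrt (1 - m * Real.sin θ ^ 2) := by
  have hint3 : IntervalIntegrable (fun θ => ((Real.sqrt (1 - m * Real.sin θ ^ 2))⁻¹) ^ 3)
      MeasureTheory.volume 0 (π/2) := ((aux_contInvD m hm0 hm1).pow 3).intervalIntegrable _ _
  have hintS : IntervalIntegrable (fun θ => Real.sqrt (1 - m * Real.sin θ ^ 2))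
      MeasureTheory.volume 0 (π/2) := (aux_contSqrtD m).intervalIntegrable _ _
  have h0 : (∫ θ in (0:ℝ)..(π/2),
      ((1 - m) * ((Real.sqrt (1 - m * Real.sin θ ^ 2))⁻¹) ^ 3
        - Real.sqrt (1 - m * Real.sin θ ^ 2))) = 0 := by
    rw [intervalIntegral.integral_eq_sub_of_hasDerivAt
      (fun θ _ => aux_antider m hm0 hm1 θ)
      (((hint3.const_mul _).sub hintS))]
    simp
  rw [intervalIntegral.integral_sub ((hint3.const_mul _)) hintS,
    intervalIntegral.integral_const_mul] at h0
  linarith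

lemma aux_derMain (k : ℝ) (hk : k ∈ Set.Ioo (0:ℝ) 1) :
    HasDerivAt EllK'
      (∫ θ in (0:ℝ)..(π/2),
        -(k * Real.sin θ ^ 2) / (Real.sqrt (1 - (1 - k^2) * Real.sin θ ^ 2)) ^ 3) k := by
  obtain ⟨hk0, hk1⟩ := hk
  set F : ℝ → ℝ → ℝ := fun x θ => (Real.sqrt (1 - (1 - x^2) * Real.sin θ ^ 2))⁻¹ with hF
  set F' : ℝ → ℝ → ℝ := fun x θ =>
    -(x * Real.sin θ ^ 2) / (Real.sqrt (1 - (1 - x^2) * Real.sin θ ^ 2)) ^ 3 with hF'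
  set ε : ℝ := min k (1 - k) / 2 with hε
  have hεpos : 0 < ε := by
    rw [hε]
    have : 0 < min k (1 - k) := lt_min hk0 (by linarith)
    positivity
  have hball : ∀ x ∈ Metric.ball k ε, k/2 ≤ x ∧ x < 1 := by
    intro x hx
    rw [Metric.mem_ball, Real.dist_eq, abs_lt] at hx
    constructor
    · have : ε ≤ k / 2 := by rw [hε]; gcongr; exact min_le_left _ _
      linarith
    · have : ε ≤ (1 - k) / 2 := by rw [hε]; gcongr; exact min_le_right _ _
      linarith
  have hDge : ∀ x : ℝ, x < 1 → 0 ≤ x → ∀ θ : ℝ, x^2 ≤ 1 - (1 - x^2) * Real.sin θ ^ 2 := by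
    intro x hx1 hx0 θ
    have h1 : (0:ℝ) ≤ 1 - x^2 := by nlinarith
    have h2 : (0:ℝ) ≤ 1 - Real.sin θ ^ 2 := by nlinarith [Real.sin_sq_le_one θ]
    nlinarith [mul_nonneg h1 h2]
  have hdiff : ∀ θ : ℝ, ∀ x ∈ Metric.ball k ε, HasDerivAt (fun x => F x θ) (F' x θ) x := by
    intro θ x hx
    obtain ⟨hxl, hxr⟩ := hball x hx
    have hx0 : 0 < x := lt_of_lt_of_le (by positivity) hxl
    have hD : 0 < 1 - (1 - x^2) * Real.sin θ ^ 2 :=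
      lt_of_lt_of_le (by positivity) (hDge x hxr hx0.le θ)
    have hr : 0 < Real.sqrt (1 - (1 - x^2) * Real.sin θ ^ 2) := Real.sqrt_pos.2 hD
    have hg : HasDerivAt (fun x : ℝ => 1 - (1 - x^2) * Real.sin θ ^ 2)
        (-(-(2 * x^1) * Real.sin θ ^ 2)) x :=
      (((hasDerivAt_pow 2 x).const_sub 1).mul_const _).const_sub 1
    have hsq := hg.sqrt hD.ne'
    have hinv := hsq.inv hr.ne'
    refine hinv.congr_deriv ?_; symm
    simp only [hF']
    set r := Real.sqrt (1 - (1 - x^2) * Real.sin θ ^ 2)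
    field_simp
  have hbound : ∀ θ : ℝ, ∀ x ∈ Metric.ball k ε, ‖F' x θ‖ ≤ 4 / k^2 := by
    intro θ x hx
    obtain ⟨hxl, hxr⟩ := hball x hx
    have hx0 : 0 < x := lt_of_lt_of_le (by positivity) hxl
    have hD : 0 < 1 - (1 - x^2) * Real.sin θ ^ 2 :=
      lt_of_lt_of_le (by positivity) (hDge x hxr hx0.le θ)
    have hr : 0 < Real.sqrt (1 - (1 - x^2) * Real.sin θ ^ 2) := Real.sqrt_pos.2 hD
    have hsd : x ≤ Real.sqrt (1 - (1 - x^2) * Real.sin θ ^ 2) := by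
      have := Real.sqrt_le_sqrt (hDge x hxr hx0.le θ)
      rwa [Real.sqrt_sq hx0.le] at this
    have h3 : x^3 ≤ Real.sqrt (1 - (1 - x^2) * Real.sin θ ^ 2) ^ 3 := by
      gcongr
    have habs : ‖F' x θ‖ = x * Real.sin θ ^ 2 / Real.sqrt (1 - (1 - x^2) * Real.sin θ ^ 2) ^ 3 := by
      rw [hF', Real.norm_eq_abs, abs_div, abs_neg, abs_of_nonneg (by positivity),
        abs_of_nonneg (by positivity)]
    rw [habs]
    calc x * Real.sin θ ^ 2 / Real.sqrt (1 - (1 - x^2) * Real.sin θ ^ 2) ^ 3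
        ≤ x / x^3 := by
          apply div_le_div₀ (le_of_lt hx0) ?_ (by positivity) h3
          nlinarith [Real.sin_sq_le_one θ]
      _ = 1 / x^2 := by field_simp
      _ ≤ 4 / k^2 := by
          rw [div_le_div_iff₀ (by positivity) (by positivity)]
          nlinarith
  have hcont : ∀ x : ℝ, 0 < x → x < 1 → Continuous (F x) := by
    intro x hx0 hx1
    apply Continuous.inv₀
      (Continuous.sqrt (continuous_const.sub (continuous_const.mul (Real.continuous_sin.pow 2))))
    intro θ
    have hD : 0 < 1 - (1 - x^2) * Real.sin θ ^ 2 :=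
      lt_of_lt_of_le (by positivity) (hDge x hx1 hx0.le θ)
    exact (Real.sqrt_pos.2 hD).ne'
  have hcont' : Continuous (F' k) := by
    apply Continuous.div ((continuous_const.mul (Real.continuous_sin.pow 2)).neg)
      ((Continuous.sqrt (continuous_const.sub
        (continuous_const.mul (Real.continuous_sin.pow 2)))).pow 3)
    intro θ
    have hD : 0 < 1 - (1 - k^2) * Real.sin θ ^ 2 :=
      lt_of_lt_of_le (by positivity) (hDge k hk1 hk0.le θ)
    exact pow_ne_zero _ (Real.sqrt_pos.2 hD).ne'
  have key := intervalIntegral.hasDerivAt_integral_of_dominated_loc_of_deriv_le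
    (F := F) (F' := F') (x₀ := k) (a := 0) (b := π/2) (bound := fun _ => 4 / k^2)
    (μ := MeasureTheory.volume) (Metric.ball_mem_nhds k hεpos)
    (Filter.eventually_of_mem (Metric.ball_mem_nhds k hεpos) (fun x hx =>
      ((hcont x (lt_of_lt_of_le (by positivity) (hball x hx).1)
        (hball x hx).2).aestronglyMeasurable)))
    ((hcont k hk0 hk1).intervalIntegrable _ _)
    hcont'.aestronglyMeasurable
    (Filter.Eventually.of_forall (fun θ _ => hbound θ))
    (intervalIntegrable_const)
    (Filter.Eventually.of_forall (fun θ _ => hdiff θ))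
  have hder := key.2
  apply hder.congr_of_eventuallyEq
  apply Filter.eventuallyEq_of_mem (Ioo_mem_nhds (show -1 < k by linarith) hk1)
  intro x hx
  obtain ⟨hx1, hx2⟩ := hx
  have h1x : (0:ℝ) ≤ 1 - x^2 := by nlinarith
  simp only [EllK', EllK, hF, Real.sq_sqrt h1x, one_div]

end AuxEll

theorem stmt_7 (k : ℝ) (hk : k ∈ Set.Ioo (0:ℝ) 1) :
    HasDerivAt EllK'
      ((k^2 * EllK' k - EllE' k) / (k * Real.sqrt (1 - k^2) ^ 2)) k := by
  obtain ⟨hk0, hk1⟩ := hk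
  have hm0 : (0:ℝ) ≤ 1 - k^2 := by nlinarith
  have hmpos : (0:ℝ) < 1 - k^2 := by nlinarith
  have hm1 : 1 - k^2 < 1 := by nlinarith
  have hsq : Real.sqrt (1 - k^2) ^ 2 = 1 - k^2 := Real.sq_sqrt hm0
  have hK : EllK' k = ∫ θ in (0:ℝ)..(π/2),
      (Real.sqrt (1 - (1 - k^2) * Real.sin θ ^ 2))⁻¹ := by
    simp only [EllK', EllK, hsq, one_div]
  have hE : EllE' k = ∫ θ in (0:ℝ)..(π/2),
      Real.sqrt (1 - (1 - k^2) * Real.sin θ ^ 2) := by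
    simp only [EllE', EllE, hsq]
  have hder := aux_derMain k ⟨hk0, hk1⟩
  have hptw : Set.EqOn
      (fun θ => -(k * Real.sin θ ^ 2) / (Real.sqrt (1 - (1 - k^2) * Real.sin θ ^ 2)) ^ 3)
      (fun θ => (-(k/(1-k^2))) * (((Real.sqrt (1 - (1 - k^2) * Real.sin θ ^ 2))⁻¹) ^ 3
        - (Real.sqrt (1 - (1 - k^2) * Real.sin θ ^ 2))⁻¹)) (Set.uIcc 0 (π/2)) := by
    intro θ _
    have hD : 0 < 1 - (1 - k^2) * Real.sin θ ^ 2 := aux_Dpos _ hm0 hm1 θ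
    have hr : 0 < Real.sqrt (1 - (1 - k^2) * Real.sin θ ^ 2) := Real.sqrt_pos.2 hD
    have hr2 : Real.sqrt (1 - (1 - k^2) * Real.sin θ ^ 2) ^ 2
        = 1 - (1 - k^2) * Real.sin θ ^ 2 := Real.sq_sqrt hD.le
    simp only
    set r := Real.sqrt (1 - (1 - k^2) * Real.sin θ ^ 2)
    field_simp
    linear_combination (-1) * hr2
  have hint3 : IntervalIntegrable
      (fun θ => ((Real.sqrt (1 - (1 - k^2) * Real.sin θ ^ 2))⁻¹) ^ 3)
      MeasureTheory.volume 0 (π/2) := ((aux_contInvD _ hm0 hm1).pow 3).intervalIntegrable _ _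
  have hint1 : IntervalIntegrable (fun θ => (Real.sqrt (1 - (1 - k^2) * Real.sin θ ^ 2))⁻¹)
      MeasureTheory.volume 0 (π/2) := (aux_contInvD _ hm0 hm1).intervalIntegrable _ _
  rw [intervalIntegral.integral_congr hptw, intervalIntegral.integral_const_mul,
      intervalIntegral.integral_sub hint3 hint1] at hder
  have hII := aux_intII (1 - k^2) hm0 hm1
  convert hder using 1
  rw [hsq, hK, hE]
  set I3 := ∫ θ in (0:ℝ)..(π/2), ((Real.sqrt (1 - (1 - k^2) * Real.sin θ ^ 2))⁻¹) ^ 3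
  set I1 := ∫ θ in (0:ℝ)..(π/2), (Real.sqrt (1 - (1 - k^2) * Real.sin θ ^ 2))⁻¹
  set I2 := ∫ θ in (0:ℝ)..(π/2), Real.sqrt (1 - (1 - k^2) * Real.sin θ ^ 2)
  field_simp
  linear_combination hII
end
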